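/- arXiv:2310.13656 — 4 statements merged into one kernel-verified Lean document; each statement's English description precedes it below -/
import Mathlib

section
/- Let f ∈ L¹(Ω) be nonnegative. If E ⊂ Ω is a minimizer of P(E) = Per_s(E) − ∫_E f with P(E) ≥ 0, then χ_E is a nonnegative minimizer of F(u) = (1/2)[u]_{W^{s,1}(ℝⁿ)} − ∫_Ω fu over all nonnegative u ∈ W^{s,1}_0(Ω). -/
open MeasureTheory Set
open scoped ENNReal

noncomputable section

/-- The Gagliardo `W^{s,1}(ℝⁿ)` seminorm of `u`, as a double integral in `ℝ≥0∞`. -/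
def gag1 (n : ℕ) (s : ℝ) (u : EuclideanSpace ℝ (Fin n) → ℝ) : ℝ≥0∞ :=
  ∫⁻ x, ∫⁻ y, ENNReal.ofReal (|u x - u y| / dist x y ^ ((n : ℝ) + s))



local notation "X" n => EuclideanSpace ℝ (Fin n)

lemma layer_one (a : ℝ) (ha : 0 ≤ a) :
    ∫⁻ t in Ioi (0:ℝ), (if t ≤ a then (1:ℝ≥0∞) else 0) = ENNReal.ofReal a := by
  have h : ∀ t : ℝ, (if t ≤ a then (1:ℝ≥0∞) else 0) = (Iic a).indicator (fun _ => (1:ℝ≥0∞)) t := by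
    intro t; by_cases h : t ≤ a <;> simp [h, Set.indicator_apply, Set.mem_Iic]
  rw [lintegral_congr h, lintegral_indicator measurableSet_Iic,
    Measure.restrict_restrict measurableSet_Iic]
  have : Iic a ∩ Ioi 0 = Ioc 0 a := by ext t; simp [and_comm]
  rw [this, setLIntegral_one, Real.volume_Ioc, sub_zero]

lemma meas_t (a b : ℝ) : Measurable fun t : ℝ =>
    ENNReal.ofReal |(if t ≤ a then (1:ℝ) else 0) - (if t ≤ b then 1 else 0)| := by
  apply Measurable.ennreal_ofReal
  apply Measurable.abs
  exact (Measurable.ite measurableSet_Iic measurable_const measurable_const).sub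
    (Measurable.ite measurableSet_Iic measurable_const measurable_const)

lemma layer_abs (a b : ℝ) (ha : 0 ≤ a) (hb : 0 ≤ b) :
    ∫⁻ t in Ioi (0:ℝ),
      ENNReal.ofReal |(if t ≤ a then (1:ℝ) else 0) - (if t ≤ b then 1 else 0)|
      = ENNReal.ofReal |a - b| := by
  wlog hab : a ≤ b generalizing a b
  · rw [abs_sub_comm, ← this b a hb ha (le_of_not_ge hab)]
    exact lintegral_congr fun t => by rw [abs_sub_comm]
  have h : ∀ t ∈ Ioi (0:ℝ),
      ENNReal.ofReal |(if t ≤ a then (1:ℝ) else 0) - (if t ≤ b then 1 else 0)|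
      = (Ioc a b).indicator (fun _ => (1:ℝ≥0∞)) t := by
    intro t _
    by_cases h1 : t ≤ a
    · have h2 : t ≤ b := h1.trans hab
      simp [h1, h2, Set.indicator_apply, Set.mem_Ioc, not_lt.2 h1]
    · by_cases h2 : t ≤ b
      · simp [h1, h2, Set.indicator_apply, Set.mem_Ioc, lt_of_not_ge h1]
      · simp [h1, h2, Set.indicator_apply, Set.mem_Ioc]
  rw [setLIntegral_congr_fun measurableSet_Ioi h,
    lintegral_indicator measurableSet_Ioc, Measure.restrict_restrict measurableSet_Ioc]
  have hsub : Ioc a b ∩ Ioi 0 = Ioc a b :=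
    inter_eq_self_of_subset_left (fun t ht => lt_of_le_of_lt ha ht.1)
  rw [hsub, setLIntegral_one, Real.volume_Ioc, abs_of_nonpos (sub_nonpos.2 hab), neg_sub]



section
variable {n : ℕ} {s : ℝ}

lemma measD (hc : 0 < (n:ℝ) + s) :
    Measurable fun p : EuclideanSpace ℝ (Fin n) × EuclideanSpace ℝ (Fin n) =>
      ENNReal.ofReal (dist p.1 p.2 ^ ((n:ℝ) + s)) :=
  (ENNReal.continuous_ofReal.comp
    ((Real.continuous_rpow_const hc.le).comp continuous_dist)).measurable

lemma ofReal_div_dist (hc : 0 < (n:ℝ) + s) (u : EuclideanSpace ℝ (Fin n) → ℝ)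
    (x y : EuclideanSpace ℝ (Fin n)) :
    ENNReal.ofReal (|u x - u y| / dist x y ^ ((n:ℝ) + s))
      = ENNReal.ofReal |u x - u y| / ENNReal.ofReal (dist x y ^ ((n:ℝ) + s)) := by
  by_cases hxy : x = y
  · subst hxy
    simp [Real.zero_rpow hc.ne']
  · have hd : 0 < dist x y := dist_pos.2 hxy
    exact ENNReal.ofReal_div_of_pos (Real.rpow_pos_of_pos hd _)

lemma gag1_eq_prod (hc : 0 < (n:ℝ) + s) {u : EuclideanSpace ℝ (Fin n) → ℝ}
    (hu : Measurable u) :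
    gag1 n s u = ∫⁻ p : EuclideanSpace ℝ (Fin n) × EuclideanSpace ℝ (Fin n),
      ENNReal.ofReal |u p.1 - u p.2| / ENNReal.ofReal (dist p.1 p.2 ^ ((n:ℝ) + s))
      ∂((volume : Measure (EuclideanSpace ℝ (Fin n))).prod volume) := by
  unfold gag1
  rw [lintegral_congr fun x => lintegral_congr fun y => ofReal_div_dist hc u x y]
  exact lintegral_lintegral
    ((((hu.comp measurable_fst).sub (hu.comp measurable_snd)).abs.ennreal_ofReal).div
      (measD hc)).aemeasurable

lemma coarea (hc : 0 < (n:ℝ) + s) {v : EuclideanSpace ℝ (Fin n) → ℝ}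
    (hv : Measurable v) (hv0 : ∀ x, 0 ≤ v x) :
    gag1 n s v = ∫⁻ t in Ioi (0:ℝ),
      gag1 n s ({x | t ≤ v x}.indicator fun _ => (1:ℝ)) := by
  set D : EuclideanSpace ℝ (Fin n) × EuclideanSpace ℝ (Fin n) → ℝ≥0∞ :=
    fun p => ENNReal.ofReal (dist p.1 p.2 ^ ((n:ℝ) + s)) with hD
  have hAm : ∀ t : ℝ, MeasurableSet {x : EuclideanSpace ℝ (Fin n) | t ≤ v x} :=
    fun t => measurableSet_le measurable_const hv
  have hind : ∀ t : ℝ, gag1 n s ({x | t ≤ v x}.indicator fun _ => (1:ℝ))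
      = ∫⁻ p : EuclideanSpace ℝ (Fin n) × EuclideanSpace ℝ (Fin n),
        ENNReal.ofReal |(if t ≤ v p.1 then (1:ℝ) else 0) - (if t ≤ v p.2 then 1 else 0)|
          / D p ∂((volume : Measure (EuclideanSpace ℝ (Fin n))).prod volume) := by
    intro t
    rw [gag1_eq_prod hc (measurable_const.indicator (hAm t))]
    exact lintegral_congr fun p => by
      simp [Set.indicator_apply, Set.mem_setOf_eq, hD]
  have hH : Measurable (Function.uncurry
      fun (p : EuclideanSpace ℝ (Fin n) × EuclideanSpace ℝ (Fin n)) (t : ℝ) =>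
        ENNReal.ofReal |(if t ≤ v p.1 then (1:ℝ) else 0) - (if t ≤ v p.2 then 1 else 0)|
          / D p) := by
    apply Measurable.div
    · apply Measurable.ennreal_ofReal
      apply Measurable.abs
      exact (Measurable.ite
          (measurableSet_le measurable_snd (hv.comp (measurable_fst.comp measurable_fst)))
          measurable_const measurable_const).sub
        (Measurable.ite
          (measurableSet_le measurable_snd (hv.comp (measurable_snd.comp measurable_fst)))
          measurable_const measurable_const)
    · exact (measD hc).comp measurable_fst
  rw [gag1_eq_prod hc hv]
  calc ∫⁻ p : EuclideanSpace ℝ (Fin n) × EuclideanSpace ℝ (Fin n),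
        ENNReal.ofReal |v p.1 - v p.2| / D p
        ∂((volume : Measure (EuclideanSpace ℝ (Fin n))).prod volume)
      = ∫⁻ p : EuclideanSpace ℝ (Fin n) × EuclideanSpace ℝ (Fin n), ∫⁻ t in Ioi (0:ℝ),
          ENNReal.ofReal |(if t ≤ v p.1 then (1:ℝ) else 0) - (if t ≤ v p.2 then 1 else 0)|
          / D p ∂volume
          ∂((volume : Measure (EuclideanSpace ℝ (Fin n))).prod volume) := by
        refine lintegral_congr fun p => ?_
        rw [← layer_abs (v p.1) (v p.2) (hv0 _) (hv0 _)]
        simp_rw [div_eq_mul_inv]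
        rw [lintegral_mul_const'' _ (meas_t (v p.1) (v p.2)).aemeasurable]
    _ = ∫⁻ t in Ioi (0:ℝ), ∫⁻ p : EuclideanSpace ℝ (Fin n) × EuclideanSpace ℝ (Fin n),
          ENNReal.ofReal |(if t ≤ v p.1 then (1:ℝ) else 0) - (if t ≤ v p.2 then 1 else 0)|
          / D p ∂((volume : Measure (EuclideanSpace ℝ (Fin n))).prod volume) :=
        lintegral_lintegral_swap hH.aemeasurable
    _ = ∫⁻ t in Ioi (0:ℝ), gag1 n s ({x | t ≤ v x}.indicator fun _ => (1:ℝ)) :=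
        lintegral_congr fun t => (hind t).symm


lemma layer_int {n : ℕ} {Ω : Set (EuclideanSpace ℝ (Fin n))} (hΩ : MeasurableSet Ω)
    {v : EuclideanSpace ℝ (Fin n) → ℝ} (hv : Measurable v) (hv0 : ∀ x, 0 ≤ v x)
    (g : EuclideanSpace ℝ (Fin n) → ℝ≥0∞) (hg : Measurable g) (hg' : ∀ x, g x ≠ ⊤) :
    ∫⁻ x in Ω, g x * ENNReal.ofReal (v x)
      = ∫⁻ t in Ioi (0:ℝ), ∫⁻ x in {x | t ≤ v x} ∩ Ω, g x := by
  have hAm : ∀ t : ℝ, MeasurableSet {x : EuclideanSpace ℝ (Fin n) | t ≤ v x} :=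
    fun t => measurableSet_le measurable_const hv
  have h1 : ∀ x, g x * ENNReal.ofReal (v x)
      = ∫⁻ t in Ioi (0:ℝ), g x * (if t ≤ v x then 1 else 0) := by
    intro x
    rw [lintegral_const_mul' _ _ (hg' x), layer_one (v x) (hv0 x)]
  rw [lintegral_congr h1]
  rw [lintegral_lintegral_swap]
  · refine lintegral_congr fun t => ?_
    have h2 : ∀ x, g x * (if t ≤ v x then (1:ℝ≥0∞) else 0)
        = ({x | t ≤ v x}).indicator g x := by
      intro x; by_cases h : t ≤ v x <;> simp [h, Set.indicator_apply, Set.mem_setOf_eq]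
    rw [lintegral_congr h2, lintegral_indicator (hAm t), Measure.restrict_restrict (hAm t)]
  · apply Measurable.aemeasurable
    apply Measurable.mul (hg.comp measurable_fst)
    exact Measurable.ite (measurableSet_le measurable_snd (hv.comp measurable_fst))
      measurable_const measurable_const

end

/-- Admissible class `W^{s,1}_0(Ω)`: measurable functions vanishing outside `Ω` with finite
Gagliardo `W^{s,1}(ℝⁿ)` seminorm (and with `f·u` integrable on `Ω`, so that the energy is
well defined). -/
def Adm (n : ℕ) (s : ℝ) (Ω : Set (EuclideanSpace ℝ (Fin n)))
    (f u : EuclideanSpace ℝ (Fin n) → ℝ) : Prop :=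
  Measurable u ∧ (∀ x ∉ Ω, u x = 0) ∧ gag1 n s u ≠ ⊤ ∧
    IntegrableOn (fun x => f x * u x) Ω

/-- The energy `F(u) = (1/2)[u]_{W^{s,1}(ℝⁿ)} − ∫_Ω f u`. -/
def F1 (n : ℕ) (s : ℝ) (Ω : Set (EuclideanSpace ℝ (Fin n)))
    (f u : EuclideanSpace ℝ (Fin n) → ℝ) : ℝ :=
  (1 / 2) * (gag1 n s u).toReal - ∫ x in Ω, f x * u x

/-- The fractional `s`-perimeter of a set `A ⊆ ℝⁿ`. -/
def perS (n : ℕ) (s : ℝ) (A : Set (EuclideanSpace ℝ (Fin n))) : ℝ≥0∞ :=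
  (1 / 2) * gag1 n s (A.indicator fun _ => (1 : ℝ))

/-- The geometric functional `P(A) = Per_s(A) − ∫_A f`, valued in `EReal`. -/
def PE (n : ℕ) (s : ℝ) (f : EuclideanSpace ℝ (Fin n) → ℝ)
    (A : Set (EuclideanSpace ℝ (Fin n))) : EReal :=
  (perS n s A : EReal) - ((∫ x in A, f x : ℝ) : EReal)

/-- The weighted fractional `(s,f)`-Cheegar constant of `Ω`. -/
def cheeg (n : ℕ) (s : ℝ) (Ω : Set (EuclideanSpace ℝ (Fin n)))
    (f : EuclideanSpace ℝ (Fin n) → ℝ) : ℝ≥0∞ :=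
  sInf {r : ℝ≥0∞ | ∃ A : Set (EuclideanSpace ℝ (Fin n)), A ⊆ Ω ∧ MeasurableSet A ∧
    (0 < ∫ x in A, f x) ∧ r = perS n s A / ENNReal.ofReal (∫ x in A, f x)}

/-- If `E ⊆ Ω` minimizes `P(E) = Per_s(E) − ∫_E f` (with nonnegative `f ∈ L¹(Ω)`) and
`P(E) ≥ 0`, then `χ_E` is a nonnegative minimizer of
`F(u) = (1/2)[u]_{W^{s,1}(ℝⁿ)} − ∫_Ω f u` over all nonnegative `u ∈ W^{s,1}_0(Ω)`. -/
theorem stmt7 (n : ℕ) (s : ℝ) (Ω E : Set (EuclideanSpace ℝ (Fin n)))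
    (f : EuclideanSpace ℝ (Fin n) → ℝ)
    (hΩo : IsOpen Ω) (hΩb : Bornology.IsBounded Ω)
    (hs0 : 0 < s) (hs1 : s < 1)
    (hf0 : ∀ x ∈ Ω, 0 ≤ f x) (hf : IntegrableOn f Ω)
    (hE : E ⊆ Ω) (hEm : MeasurableSet E)
    (hmin : ∀ F : Set (EuclideanSpace ℝ (Fin n)), F ⊆ Ω → MeasurableSet F →
      PE n s f E ≤ PE n s f F)
    (hpos : 0 ≤ PE n s f E) :
    Adm n s Ω f (E.indicator fun _ => (1 : ℝ)) ∧
    (∀ x, 0 ≤ E.indicator (fun _ => (1 : ℝ)) x) ∧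
    ∀ v, Adm n s Ω f v → (∀ x, 0 ≤ v x) →
      F1 n s Ω f (E.indicator fun _ => (1 : ℝ)) ≤ F1 n s Ω f v := by
  have hc : 0 < (n:ℝ) + s := by positivity
  have hΩm : MeasurableSet Ω := hΩo.measurableSet
  have hper0 : perS n s (∅ : Set (EuclideanSpace ℝ (Fin n))) = 0 := by
    simp [perS, gag1]
  have hPE0 : PE n s f E = 0 := by
    refine le_antisymm ?_ hpos
    have h := hmin ∅ (empty_subset _) MeasurableSet.empty
    simpa [PE, hper0] using h
  have hperE_ne : perS n s E ≠ ⊤ := by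
    intro h
    rw [PE, h] at hPE0
    simp [EReal.top_sub_coe] at hPE0
  have hEtoReal : (perS n s E).toReal = ∫ x in E, f x := by
    have hne_top : (perS n s E : EReal) ≠ ⊤ := by
      simpa [EReal.coe_ennreal_eq_top_iff] using hperE_ne
    have h := hPE0
    rw [PE, ← EReal.coe_toReal hne_top (EReal.coe_ennreal_ne_bot _),
      EReal.toReal_coe_ennreal, ← EReal.coe_sub] at h
    have h2 : (perS n s E).toReal - ∫ x in E, f x = 0 := by exact_mod_cast h
    linarith
  have hkey : ∀ A : Set (EuclideanSpace ℝ (Fin n)), A ⊆ Ω → MeasurableSet A →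
      ENNReal.ofReal (∫ x in A, f x) ≤ perS n s A := by
    intro A hA hAm'
    by_cases htop : perS n s A = ⊤
    · simp [htop]
    have h := hmin A hA hAm'
    rw [hPE0] at h
    have hne : (perS n s A : EReal) ≠ ⊤ := by
      simpa [EReal.coe_ennreal_eq_top_iff] using htop
    rw [PE, ← EReal.coe_toReal hne (EReal.coe_ennreal_ne_bot _),
      EReal.toReal_coe_ennreal, ← EReal.coe_sub] at h
    have h2 : (0:ℝ) ≤ (perS n s A).toReal - ∫ x in A, f x := by exact_mod_cast h
    calc ENNReal.ofReal (∫ x in A, f x) ≤ ENNReal.ofReal ((perS n s A).toReal) :=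
          ENNReal.ofReal_le_ofReal (by linarith)
      _ = perS n s A := ENNReal.ofReal_toReal htop
  have hχm : Measurable (E.indicator fun _ => (1:ℝ)) := measurable_const.indicator hEm
  have hgagE : gag1 n s (E.indicator fun _ => (1:ℝ)) ≠ ⊤ := by
    intro h
    apply hperE_ne
    rw [perS, h, ENNReal.mul_top (by norm_num)]
  have hprod : (fun x => f x * (E.indicator fun _ => (1:ℝ)) x) = E.indicator f := by
    funext x
    by_cases hx : x ∈ E <;>
      simp [hx, Set.indicator_of_mem, Set.indicator_of_notMem]
  have hintΩ : IntegrableOn (fun x => f x * (E.indicator fun _ => (1:ℝ)) x) Ω := by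
    rw [hprod]
    exact hf.indicator hEm
  have hintE : ∫ x in Ω, f x * (E.indicator fun _ => (1:ℝ)) x = ∫ x in E, f x := by
    rw [show (fun x => f x * (E.indicator fun _ => (1:ℝ)) x) = E.indicator f from hprod,
      setIntegral_indicator hEm, inter_eq_self_of_subset_right hE]
  have hF1E : F1 n s Ω f (E.indicator fun _ => (1:ℝ)) = 0 := by
    rw [F1, hintE]
    have h12 : (1/2 : ℝ) * (gag1 n s (E.indicator fun _ => (1:ℝ))).toReal
        = (perS n s E).toReal := by
      rw [perS, ENNReal.toReal_mul]
      norm_num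
    rw [h12, hEtoReal]
    ring
  refine ⟨⟨hχm, fun x hx => Set.indicator_of_notMem (fun hxE => hx (hE hxE)) _, hgagE, hintΩ⟩,
    fun x => Set.indicator_nonneg (fun _ _ => zero_le_one) x, ?_⟩
  rintro v ⟨hvm, hvΩ, hvg, hvint⟩ hv0
  rw [hF1E]
  set f' := hf.aestronglyMeasurable.mk f with hf'def
  have hf'm : Measurable f' := hf.aestronglyMeasurable.stronglyMeasurable_mk.measurable
  have hff' : f =ᵐ[volume.restrict Ω] f' := hf.aestronglyMeasurable.ae_eq_mk
  set g : EuclideanSpace ℝ (Fin n) → ℝ≥0∞ := fun x => ENNReal.ofReal (f' x) with hgdef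
  have hAΩ : ∀ t : ℝ, t ∈ Ioi (0:ℝ) → {x | t ≤ v x} ⊆ Ω := by
    intro t ht x hx
    by_contra hxΩ
    rw [Set.mem_setOf_eq, hvΩ x hxΩ] at hx
    exact absurd (lt_of_lt_of_le ht hx) (lt_irrefl 0)
  have hAm : ∀ t : ℝ, MeasurableSet {x : EuclideanSpace ℝ (Fin n) | t ≤ v x} :=
    fun t => measurableSet_le measurable_const hvm
  have hnn : 0 ≤ᵐ[volume.restrict Ω] fun x => f x * v x :=
    ae_restrict_of_forall_mem hΩm fun x hx => mul_nonneg (hf0 x hx) (hv0 x)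
  have key : ENNReal.ofReal (∫ x in Ω, f x * v x) ≤ (1/2 : ℝ≥0∞) * gag1 n s v := by
    rw [ofReal_integral_eq_lintegral_ofReal hvint hnn]
    have e1 : ∫⁻ x in Ω, ENNReal.ofReal (f x * v x)
        = ∫⁻ x in Ω, g x * ENNReal.ofReal (v x) := by
      have e1a : ∫⁻ x in Ω, ENNReal.ofReal (f x * v x)
          = ∫⁻ x in Ω, ENNReal.ofReal (f x) * ENNReal.ofReal (v x) :=
        setLIntegral_congr_fun hΩm
          (fun x hx => by rw [ENNReal.ofReal_mul (hf0 x hx)])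
      rw [e1a]
      exact lintegral_congr_ae (hff'.mono fun x hx => by simp only [hx, hgdef])
    rw [e1, layer_int hΩm hvm hv0 g hf'm.ennreal_ofReal (fun x => ENNReal.ofReal_ne_top)]
    have step : ∀ t ∈ Ioi (0:ℝ),
        ∫⁻ x in {x | t ≤ v x} ∩ Ω, g x ≤ perS n s {x | t ≤ v x} := by
      intro t ht
      have hsub : {x | t ≤ v x} ⊆ Ω := hAΩ t ht
      have hint' : IntegrableOn f {x | t ≤ v x} := hf.mono_set hsub
      have h0 : 0 ≤ᵐ[volume.restrict {x | t ≤ v x}] f :=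
        ae_restrict_of_forall_mem (hAm t) fun x hx => hf0 x (hsub hx)
      have hgf : ∫⁻ x in {x | t ≤ v x}, g x
          = ∫⁻ x in {x | t ≤ v x}, ENNReal.ofReal (f x) :=
        lintegral_congr_ae ((ae_restrict_of_ae_restrict_of_subset hsub hff').mono
          fun x hx => by simp only [hx, hgdef])
      rw [inter_eq_self_of_subset_left hsub, hgf,
        ← ofReal_integral_eq_lintegral_ofReal hint' h0]
      exact hkey _ hsub (hAm t)
    calc ∫⁻ t in Ioi (0:ℝ), ∫⁻ x in {x | t ≤ v x} ∩ Ω, g x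
        ≤ ∫⁻ t in Ioi (0:ℝ), perS n s {x | t ≤ v x} :=
          lintegral_mono_ae (ae_restrict_of_forall_mem measurableSet_Ioi step)
      _ = ∫⁻ t in Ioi (0:ℝ),
            (1/2 : ℝ≥0∞) * gag1 n s ({x | t ≤ v x}.indicator fun _ => (1:ℝ)) :=
          lintegral_congr fun t => rfl
      _ = (1/2 : ℝ≥0∞) *
            ∫⁻ t in Ioi (0:ℝ), gag1 n s ({x | t ≤ v x}.indicator fun _ => (1:ℝ)) :=
          lintegral_const_mul' _ _ (by norm_num)
      _ = (1/2 : ℝ≥0∞) * gag1 n s v := by rw [← coarea hc hvm hv0]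
  have hfv0 : 0 ≤ ∫ x in Ω, f x * v x := integral_nonneg_of_ae hnn
  have hgv : (1/2:ℝ≥0∞) * gag1 n s v ≠ ⊤ := ENNReal.mul_ne_top (by norm_num) hvg
  have hle : ∫ x in Ω, f x * v x ≤ ((1/2:ℝ≥0∞) * gag1 n s v).toReal := by
    have h := ENNReal.toReal_mono hgv key
    rwa [ENNReal.toReal_ofReal hfv0] at h
  have h2 : ((1/2:ℝ≥0∞) * gag1 n s v).toReal = (1/2) * (gag1 n s v).toReal := by
    rw [ENNReal.toReal_mul]
    norm_num
  rw [F1]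
  rw [h2] at hle
  linarith


end
end

section
/- Let f ≥ 0 satisfy f ∈ L^{n/σ}(Ω), σ ∈ (0,s), with positive integral on some ball inside Ω. If the weighted fractional Cheegar constant satisfies h^f_s(Ω) < 1, then inf{ (1/2)[u]_{W^{s,1}(ℝⁿ)} − ∫_Ω fu : u ∈ W^{s,1}_0(Ω) } = −∞. -/
open MeasureTheory Set
open scoped ENNReal

noncomputable section

/-- If the weighted fractional Cheegar constant satisfies `h^f_s(Ω) < 1` (with `f ≥ 0`,
`f ∈ L^{n/σ}(Ω)` for some `σ ∈ (0,s)`, and `∫_B f > 0` on some ball `B ⊆ Ω`), then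
`inf { (1/2)[u]_{W^{s,1}(ℝⁿ)} − ∫_Ω f u : u ∈ W^{s,1}_0(Ω) } = −∞`. -/
theorem stmt11 (n : ℕ) (s σ : ℝ) (Ω : Set (EuclideanSpace ℝ (Fin n)))
    (f : EuclideanSpace ℝ (Fin n) → ℝ)
    (hΩo : IsOpen Ω) (hΩb : Bornology.IsBounded Ω)
    (hs0 : 0 < s) (hs1 : s < 1) (hσ0 : 0 < σ) (hσs : σ < s)
    (hf0 : ∀ x ∈ Ω, 0 ≤ f x)
    (hf : MemLp f (ENNReal.ofReal ((n : ℝ) / σ)) (volume.restrict Ω))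
    (x₀ : EuclideanSpace ℝ (Fin n)) (r₀ : ℝ) (hr₀ : 0 < r₀)
    (hball : Metric.ball x₀ r₀ ⊆ Ω) (hfball : 0 < ∫ x in Metric.ball x₀ r₀, f x)
    (hcheeg : cheeg n s Ω f < 1) :
    ∀ M : ℝ, ∃ u, Adm n s Ω f u ∧ F1 n s Ω f u < M := by
  intro M
  obtain ⟨r, ⟨A, hAΩ, hAm, hI, hr⟩, hr1⟩ := sInf_lt_iff.mp hcheeg
  set I : ℝ := ∫ x in A, f x with hIdef
  -- f integrable on A (otherwise integral would be 0)
  have hfint : IntegrableOn f A := by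
    by_contra h
    rw [hIdef] at hI
    rw [MeasureTheory.integral_undef h] at hI
    exact lt_irrefl 0 hI
  have hb0 : ENNReal.ofReal I ≠ 0 := by
    simpa [ENNReal.ofReal_pos] using hI
  have hbt : ENNReal.ofReal I ≠ ⊤ := ENNReal.ofReal_ne_top
  have hPlt : perS n s A < ENNReal.ofReal I := by
    rw [hr, ENNReal.div_lt_iff (Or.inl hb0) (Or.inl hbt), one_mul] at hr1
    exact hr1
  set χ : EuclideanSpace ℝ (Fin n) → ℝ := A.indicator fun _ => (1 : ℝ) with hχdef
  set G : ℝ≥0∞ := gag1 n s χ with hGdef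
  have hPG : perS n s A = (1 / 2 : ℝ≥0∞) * G := rfl
  have hGfin : G ≠ ⊤ := by
    intro h
    rw [hPG, h, ENNReal.mul_top (by norm_num)] at hPlt
    exact (not_top_lt) hPlt
  have hPfin : perS n s A ≠ ⊤ := hPlt.ne_top
  have hhalf : (1 / 2 : ℝ) * G.toReal = (perS n s A).toReal := by
    rw [hPG, ENNReal.toReal_mul]
    norm_num
  have hlt : (perS n s A).toReal < I :=
    ENNReal.toReal_lt_of_lt_ofReal hPlt
  set c : ℝ := (1 / 2 : ℝ) * G.toReal - I with hcdef
  have hc0 : c < 0 := by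
    rw [hcdef, hhalf]; linarith
  set lam : ℝ := max 1 ((M - 1) / c) with hlamdef
  have hlam0 : 0 ≤ lam := le_trans zero_le_one (le_max_left _ _)
  have hlamc : lam * c < M := by
    have h1 : (M - 1) / c ≤ lam := le_max_right _ _
    have := (div_le_iff_of_neg hc0).mp h1
    linarith
  set u : EuclideanSpace ℝ (Fin n) → ℝ := fun x => lam * χ x with hudef
  -- scaling of the Gagliardo seminorm
  have hgagu : gag1 n s u = ENNReal.ofReal lam * G := by
    rw [hGdef, gag1, gag1]
    rw [← MeasureTheory.lintegral_const_mul' _ _ ENNReal.ofReal_ne_top]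
    refine lintegral_congr fun x => ?_
    rw [← MeasureTheory.lintegral_const_mul' _ _ ENNReal.ofReal_ne_top]
    refine lintegral_congr fun y => ?_
    rw [hudef]
    simp only
    rw [← mul_sub, abs_mul, abs_of_nonneg hlam0, mul_div_assoc,
      ENNReal.ofReal_mul hlam0]
  have hgufin : gag1 n s u ≠ ⊤ := by
    rw [hgagu]
    exact ENNReal.mul_ne_top ENNReal.ofReal_ne_top hGfin
  -- pointwise identity for the integrand
  have hfu : ∀ x, f x * u x = lam * A.indicator f x := by
    intro x
    rw [hudef, hχdef]
    by_cases hx : x ∈ A <;> simp [Set.indicator_apply, hx] <;> ring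
  have hindint : Integrable (A.indicator f) := by
    rwa [MeasureTheory.integrable_indicator_iff hAm]
  have hint : IntegrableOn (fun x => f x * u x) Ω := by
    have : IntegrableOn (A.indicator f) Ω := hindint.integrableOn
    have h2 := this.const_mul lam
    exact h2.congr (Filter.Eventually.of_forall fun x => (hfu x).symm)
  have hintval : ∫ x in Ω, f x * u x = lam * I := by
    calc ∫ x in Ω, f x * u x = ∫ x in Ω, lam * A.indicator f x := by
          refine integral_congr_ae (Filter.Eventually.of_forall fun x => hfu x)
      _ = lam * ∫ x in Ω, A.indicator f x := by rw [MeasureTheory.integral_const_mul]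
      _ = lam * ∫ x in Ω ∩ A, f x := by rw [MeasureTheory.setIntegral_indicator hAm]
      _ = lam * I := by rw [Set.inter_eq_self_of_subset_right hAΩ]
  refine ⟨u, ⟨?_, ?_, hgufin, hint⟩, ?_⟩
  · exact measurable_const.mul ((measurable_const (a := (1:ℝ))).indicator hAm)
  · intro x hx
    have hxA : x ∉ A := fun h => hx (hAΩ h)
    rw [hudef, hχdef]
    simp [Set.indicator_apply, hxA]
  · rw [F1, hgagu, hintval, ENNReal.toReal_mul, ENNReal.toReal_ofReal hlam0]
    calc (1 / 2 : ℝ) * (lam * G.toReal) - lam * I = lam * c := by rw [hcdef]; ring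
      _ < M := hlamc

end
end

section
/- Let u₁, u₂ ∈ W^{s,1}_0(Ω) be two weak solutions of (−Δ)^s_1 u = f with associated sign fields z₁, z₂ (each zᵢ ∈ L^∞(ℝ^{2n}), ‖zᵢ‖_∞ ≤ 1, antisymmetric, zᵢ ∈ sgn(uᵢ(x)−uᵢ(y)) a.e., and satisfying the weak formulation against all test functions in W^{s,1}_0(Ω)). Then for i, j ∈ {1,2}, z_j(x,y) ∈ sgn(u_i(x)−u_i(y)) almost everywhere on ℝ^{2n} \ (ℝⁿ\Ω)². -/
open MeasureTheory Set
open scoped ENNReal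

noncomputable section

lemma squeeze_ae {α : Type*} [MeasurableSpace α] {μ : Measure α} {g h : α → ℝ}
    (hg : Integrable g μ) (hh : Integrable h μ) (hle : ∀ a, h a ≤ g a)
    (heq : ∫ a, h a ∂μ = ∫ a, g a ∂μ) : h =ᵐ[μ] g := by
  have h0 : 0 ≤ᵐ[μ] fun a => g a - h a := ae_of_all _ fun a => sub_nonneg.2 (hle a)
  have hint : Integrable (fun a => g a - h a) μ := hg.sub hh
  have hz : ∫ a, (g a - h a) ∂μ = 0 := by
    rw [integral_sub hg hh]; linarith
  have h0' := (integral_eq_zero_iff_of_nonneg_ae h0 hint).mp hz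
  filter_upwards [h0'] with a ha
  have : g a - h a = 0 := ha
  linarith

lemma half_squeeze (n : ℕ) (s : ℝ) (Ω : Set (EuclideanSpace ℝ (Fin n)))
    (u : EuclideanSpace ℝ (Fin n) → ℝ)
    (z z' : EuclideanSpace ℝ (Fin n) → EuclideanSpace ℝ (Fin n) → ℝ)
    (hu0 : ∀ x ∉ Ω, u x = 0)
    (hz_bd : ∀ x y, |z x y| ≤ 1)
    (hz'_sgn : ∀ᵐ p : EuclideanSpace ℝ (Fin n) × EuclideanSpace ℝ (Fin n),
      (p.1 ∈ Ω ∨ p.2 ∈ Ω) → z' p.1 p.2 * (u p.1 - u p.2) = |u p.1 - u p.2|)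
    (hz_int : Integrable (fun p : EuclideanSpace ℝ (Fin n) × EuclideanSpace ℝ (Fin n) =>
      z p.1 p.2 * (u p.1 - u p.2) / dist p.1 p.2 ^ ((n : ℝ) + s)))
    (hz'_int : Integrable (fun p : EuclideanSpace ℝ (Fin n) × EuclideanSpace ℝ (Fin n) =>
      z' p.1 p.2 * (u p.1 - u p.2) / dist p.1 p.2 ^ ((n : ℝ) + s)))
    (hint_eq : (∫ p : EuclideanSpace ℝ (Fin n) × EuclideanSpace ℝ (Fin n),
        z p.1 p.2 * (u p.1 - u p.2) / dist p.1 p.2 ^ ((n : ℝ) + s))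
      = ∫ p : EuclideanSpace ℝ (Fin n) × EuclideanSpace ℝ (Fin n),
        z' p.1 p.2 * (u p.1 - u p.2) / dist p.1 p.2 ^ ((n : ℝ) + s)) :
    ∀ᵐ p : EuclideanSpace ℝ (Fin n) × EuclideanSpace ℝ (Fin n),
      (p.1 ∈ Ω ∨ p.2 ∈ Ω) → z p.1 p.2 * (u p.1 - u p.2) = |u p.1 - u p.2| := by
  set d : EuclideanSpace ℝ (Fin n) × EuclideanSpace ℝ (Fin n) → ℝ :=
    fun p => dist p.1 p.2 ^ ((n : ℝ) + s) with hd
  set g : EuclideanSpace ℝ (Fin n) × EuclideanSpace ℝ (Fin n) → ℝ :=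
    fun p => |u p.1 - u p.2| / d p with hgdef
  set h : EuclideanSpace ℝ (Fin n) × EuclideanSpace ℝ (Fin n) → ℝ :=
    fun p => z p.1 p.2 * (u p.1 - u p.2) / d p with hhdef
  have hgeq : (fun p : EuclideanSpace ℝ (Fin n) × EuclideanSpace ℝ (Fin n) =>
      z' p.1 p.2 * (u p.1 - u p.2) / d p) =ᵐ[volume] g := by
    filter_upwards [hz'_sgn] with p hp
    by_cases hc : p.1 ∈ Ω ∨ p.2 ∈ Ω
    · simp only [hgdef, hp hc]
    · push_neg at hc
      simp only [hgdef, hu0 _ hc.1, hu0 _ hc.2]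
      simp
  have hg : Integrable g volume := hz'_int.congr hgeq
  have hle : ∀ p, h p ≤ g p := by
    intro p
    have h1 : z p.1 p.2 * (u p.1 - u p.2) ≤ |u p.1 - u p.2| := by
      calc z p.1 p.2 * (u p.1 - u p.2) ≤ |z p.1 p.2 * (u p.1 - u p.2)| := le_abs_self _
        _ = |z p.1 p.2| * |u p.1 - u p.2| := abs_mul _ _
        _ ≤ 1 * |u p.1 - u p.2| :=
            mul_le_mul_of_nonneg_right (hz_bd _ _) (abs_nonneg _)
        _ = |u p.1 - u p.2| := one_mul _
    have h2 : (0 : ℝ) ≤ (d p)⁻¹ :=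
      inv_nonneg.2 (Real.rpow_nonneg dist_nonneg _)
    simp only [hhdef, hgdef, div_eq_mul_inv]
    exact mul_le_mul_of_nonneg_right h1 h2
  have heq : ∫ p, h p = ∫ p, g p := by
    rw [hint_eq]; exact integral_congr_ae hgeq
  have key := squeeze_ae hg hz_int hle heq
  filter_upwards [key] with p hp _
  by_cases hpp : p.1 = p.2
  · simp [hpp]
  · have hdpos : 0 < d p := by
      have : 0 < dist p.1 p.2 := dist_pos.2 hpp
      exact Real.rpow_pos_of_pos this _
    have := hp
    simp only [hhdef, hgdef] at this
    exact (div_left_inj' (ne_of_gt hdpos)).mp this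

/-- If `u₁, u₂ ∈ W^{s,1}_0(Ω)` are two weak solutions of `(−Δ)^s_1 u = f` with sign fields
`z₁, z₂`, then each `z_j(x,y) ∈ sgn(u_i(x)−u_i(y))` a.e. on `ℝ^{2n} \ (Ωᶜ)²` for
`i, j ∈ {1,2}`.  Membership `z ∈ sgn(t)` (given `|z| ≤ 1`) is encoded as `z·t = |t|`. -/
theorem stmt13 (n : ℕ) (s : ℝ) (Ω : Set (EuclideanSpace ℝ (Fin n)))
    (f u₁ u₂ : EuclideanSpace ℝ (Fin n) → ℝ)
    (z₁ z₂ : EuclideanSpace ℝ (Fin n) → EuclideanSpace ℝ (Fin n) → ℝ)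
    (hΩo : IsOpen Ω) (hΩb : Bornology.IsBounded Ω)
    (hs0 : 0 < s) (hs1 : s < 1)
    (hf : MemLp f (ENNReal.ofReal ((n : ℝ) / s)) (volume.restrict Ω))
    (hu₁ : Adm n s Ω f u₁) (hu₂ : Adm n s Ω f u₂)
    (hz₁_meas : Measurable fun p : EuclideanSpace ℝ (Fin n) × EuclideanSpace ℝ (Fin n) =>
      z₁ p.1 p.2)
    (hz₂_meas : Measurable fun p : EuclideanSpace ℝ (Fin n) × EuclideanSpace ℝ (Fin n) =>
      z₂ p.1 p.2)
    (hz₁_bd : ∀ x y, |z₁ x y| ≤ 1) (hz₂_bd : ∀ x y, |z₂ x y| ≤ 1)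
    (hz₁_anti : ∀ x y, z₁ y x = - z₁ x y) (hz₂_anti : ∀ x y, z₂ y x = - z₂ x y)
    (hz₁_sgn : ∀ᵐ p : EuclideanSpace ℝ (Fin n) × EuclideanSpace ℝ (Fin n),
      (p.1 ∈ Ω ∨ p.2 ∈ Ω) → z₁ p.1 p.2 * (u₁ p.1 - u₁ p.2) = |u₁ p.1 - u₁ p.2|)
    (hz₂_sgn : ∀ᵐ p : EuclideanSpace ℝ (Fin n) × EuclideanSpace ℝ (Fin n),
      (p.1 ∈ Ω ∨ p.2 ∈ Ω) → z₂ p.1 p.2 * (u₂ p.1 - u₂ p.2) = |u₂ p.1 - u₂ p.2|)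
    (hz₁_int : ∀ w, Adm n s Ω f w →
      Integrable (fun p : EuclideanSpace ℝ (Fin n) × EuclideanSpace ℝ (Fin n) =>
        z₁ p.1 p.2 * (w p.1 - w p.2) / dist p.1 p.2 ^ ((n : ℝ) + s)))
    (hz₂_int : ∀ w, Adm n s Ω f w →
      Integrable (fun p : EuclideanSpace ℝ (Fin n) × EuclideanSpace ℝ (Fin n) =>
        z₂ p.1 p.2 * (w p.1 - w p.2) / dist p.1 p.2 ^ ((n : ℝ) + s)))
    (hz₁_weak : ∀ w, Adm n s Ω f w →
      (1 / 2) * ∫ p : EuclideanSpace ℝ (Fin n) × EuclideanSpace ℝ (Fin n),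
          z₁ p.1 p.2 * (w p.1 - w p.2) / dist p.1 p.2 ^ ((n : ℝ) + s)
        = ∫ x in Ω, f x * w x)
    (hz₂_weak : ∀ w, Adm n s Ω f w →
      (1 / 2) * ∫ p : EuclideanSpace ℝ (Fin n) × EuclideanSpace ℝ (Fin n),
          z₂ p.1 p.2 * (w p.1 - w p.2) / dist p.1 p.2 ^ ((n : ℝ) + s)
        = ∫ x in Ω, f x * w x) :
    (∀ᵐ p : EuclideanSpace ℝ (Fin n) × EuclideanSpace ℝ (Fin n),
      (p.1 ∈ Ω ∨ p.2 ∈ Ω) → z₁ p.1 p.2 * (u₂ p.1 - u₂ p.2) = |u₂ p.1 - u₂ p.2|) ∧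
    (∀ᵐ p : EuclideanSpace ℝ (Fin n) × EuclideanSpace ℝ (Fin n),
      (p.1 ∈ Ω ∨ p.2 ∈ Ω) → z₂ p.1 p.2 * (u₁ p.1 - u₁ p.2) = |u₁ p.1 - u₁ p.2|) := by
  constructor
  · refine half_squeeze n s Ω u₂ z₁ z₂ hu₂.2.1 hz₁_bd hz₂_sgn
      (hz₁_int u₂ hu₂) (hz₂_int u₂ hu₂) ?_
    have h1 := hz₁_weak u₂ hu₂
    have h2 := hz₂_weak u₂ hu₂
    linarith
  · refine half_squeeze n s Ω u₁ z₂ z₁ hu₁.2.1 hz₂_bd hz₁_sgn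
      (hz₂_int u₁ hu₁) (hz₁_int u₁ hu₁) ?_
    have h1 := hz₁_weak u₁ hu₁
    have h2 := hz₂_weak u₁ hu₁
    linarith

end
end

section
/- Let Ω ⊂ ℝⁿ be bounded with Lipschitz boundary, s ∈ (0,1), f ∈ L^{n/s}(Ω), and let u ∈ W^{s,1}_0(Ω) be a minimizer of F(v) = (1/2)[v]_{W^{s,1}(ℝⁿ)} − ∫_Ω fv. Then u ∈ L^∞(ℝⁿ), and moreover the extremal set {x ∈ ℝⁿ : |u(x)| = ‖u‖_{L^∞(ℝⁿ)}} has positive Lebesgue measure (when u ≠ 0, one has ‖f‖_{L^{n/s}({|u| = ‖u‖_∞})} ≥ 1/(2S_{n,s})). -/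
open MeasureTheory Set
open scoped ENNReal

noncomputable section

namespace Flat
variable {n : ℕ} {s : ℝ}

/-- truncation -/
def tk (k t : ℝ) : ℝ := max (-k) (min t k)

lemma tk_mono {k a b : ℝ} (h : a ≤ b) : tk k a ≤ tk k b := by
  unfold tk; exact max_le_max le_rfl (min_le_min h le_rfl)

lemma tk_lip {k a b : ℝ} (h : a ≤ b) : tk k b - tk k a ≤ b - a := by
  unfold tk; simp only [max_def, min_def]; split_ifs <;> linarith

lemma tk_zero {k : ℝ} (hk : 0 ≤ k) : tk k 0 = 0 := by
  unfold tk; simp only [max_def, min_def]; split_ifs <;> linarith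

lemma abs_tk_le {k : ℝ} (hk : 0 ≤ k) (t : ℝ) : |tk k t| ≤ |t| := by
  unfold tk; simp only [max_def, min_def, abs_le]; split_ifs <;>
    constructor <;> cases abs_cases t <;> linarith

lemma abs_sub_tk {k : ℝ} (a b : ℝ) :
    |a - b| = |tk k a - tk k b| + |(a - tk k a) - (b - tk k b)| := by
  rcases le_total a b with h | h
  · have h1 := tk_mono (k := k) h
    have h2 := tk_lip (k := k) h
    rw [abs_of_nonpos (by linarith), abs_of_nonpos (by linarith), abs_of_nonpos (by linarith)]
    ring
  · have h1 := tk_mono (k := k) h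
    have h2 := tk_lip (k := k) h
    rw [abs_of_nonneg (by linarith), abs_of_nonneg (by linarith), abs_of_nonneg (by linarith)]
    ring

lemma gk_eq_zero_iff {k t : ℝ} (hk : 0 ≤ k) : t - tk k t = 0 ↔ |t| ≤ k := by
  unfold tk; simp only [max_def, min_def, abs_le]; split_ifs <;>
    constructor <;> intro h' <;> first | constructor <;> linarith | linarith [h'.1, h'.2]

/-- the kernel -/
def ker (n : ℕ) (s : ℝ) (u : EuclideanSpace ℝ (Fin n) → ℝ)
    (p : EuclideanSpace ℝ (Fin n) × EuclideanSpace ℝ (Fin n)) : ℝ≥0∞ :=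
  ENNReal.ofReal (|u p.1 - u p.2| / dist p.1 p.2 ^ ((n : ℝ) + s))

lemma measurable_ker {u : EuclideanSpace ℝ (Fin n) → ℝ} (hu : Measurable u) :
    Measurable (ker n s u) := by
  apply ENNReal.measurable_ofReal.comp
  exact (((hu.comp measurable_fst).sub (hu.comp measurable_snd)).abs).div
    (measurable_dist.pow_const _)

lemma gag1_eq_ker (u : EuclideanSpace ℝ (Fin n) → ℝ) :
    gag1 n s u = ∫⁻ x, ∫⁻ y, ker n s u (x, y) := rfl

lemma measurable_inner_ker {u : EuclideanSpace ℝ (Fin n) → ℝ} (hu : Measurable u) :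
    Measurable (fun x => ∫⁻ y, ker n s u (x, y)) :=
  (measurable_ker hu).lintegral_prod_right'

lemma gag1_mono_of_abs_le {u v : EuclideanSpace ℝ (Fin n) → ℝ}
    (h : ∀ x y, |u x - u y| ≤ |v x - v y|) : gag1 n s u ≤ gag1 n s v := by
  refine lintegral_mono fun x => lintegral_mono fun y => ENNReal.ofReal_le_ofReal ?_
  have hd : (0:ℝ) ≤ dist x y ^ ((n : ℝ) + s) := Real.rpow_nonneg dist_nonneg _
  rw [div_eq_mul_inv, div_eq_mul_inv]
  exact mul_le_mul_of_nonneg_right (h x y) (inv_nonneg.mpr hd)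

lemma measurable_tk_comp {u : EuclideanSpace ℝ (Fin n) → ℝ} (hu : Measurable u) (k : ℝ) :
    Measurable (fun x => tk k (u x)) :=
  measurable_const.max (hu.min measurable_const)

lemma gag1_add_trunc {u : EuclideanSpace ℝ (Fin n) → ℝ} (hu : Measurable u) (k : ℝ) :
    gag1 n s u
      = gag1 n s (fun x => tk k (u x)) + gag1 n s (fun x => u x - tk k (u x)) := by
  have htk : Measurable (fun x => tk k (u x)) := measurable_tk_comp hu k
  have hgk : Measurable (fun x => u x - tk k (u x)) := hu.sub htk
  rw [gag1_eq_ker, gag1_eq_ker, gag1_eq_ker]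
  have hpt : ∀ x y, ker n s u (x, y)
      = ker n s (fun x => tk k (u x)) (x, y) + ker n s (fun x => u x - tk k (u x)) (x, y) := by
    intro x y
    unfold ker
    simp only
    rw [abs_sub_tk (k := k) (u x) (u y), add_div, ENNReal.ofReal_add] <;>
      positivity
  have : ∀ x, ∫⁻ y, ker n s u (x, y)
      = (∫⁻ y, ker n s (fun x => tk k (u x)) (x, y))
        + ∫⁻ y, ker n s (fun x => u x - tk k (u x)) (x, y) := by
    intro x
    rw [lintegral_congr fun y => hpt x y]
    exact lintegral_add_left (((measurable_ker (s := s) htk).comp (measurable_prodMk_left))) _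
  rw [lintegral_congr this]
  exact lintegral_add_left (measurable_inner_ker htk) _


lemma ae_zero_of_gag1_eq_zero (hn : 1 ≤ n) {v : EuclideanSpace ℝ (Fin n) → ℝ}
    (hv : Measurable v) {Ω : Set (EuclideanSpace ℝ (Fin n))}
    (hzero : ∀ x ∉ Ω, v x = 0) (hΩ : volume Ωᶜ ≠ 0)
    (h : gag1 n s v = 0) : ∀ᵐ x, v x = 0 := by
  haveI : Nontrivial (EuclideanSpace ℝ (Fin n)) :=
    Module.nontrivial_of_finrank_pos (R := ℝ)
      (by rw [finrank_euclideanSpace_fin]; omega)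
  rw [gag1_eq_ker] at h
  have h1 : (fun x => ∫⁻ y, ker n s v (x, y)) =ᵐ[volume] 0 :=
    (lintegral_eq_zero_iff (measurable_inner_ker hv)).mp h
  filter_upwards [h1] with x hx
  by_contra hvx
  have h2 : (fun y => ker n s v (x, y)) =ᵐ[volume] 0 :=
    (lintegral_eq_zero_iff ((measurable_ker hv).comp measurable_prodMk_left)).mp hx
  have hne : ∀ᵐ (y : EuclideanSpace ℝ (Fin n)), y ≠ x := by
    rw [ae_iff]
    simp only [ne_eq, not_not]
    simpa using measure_singleton x
  have h3 : ∀ᵐ y, v y = v x := by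
    filter_upwards [h2, hne] with y hy hyx
    have hd : (0:ℝ) < dist x y ^ ((n:ℝ) + s) := by
      apply Real.rpow_pos_of_pos
      exact dist_pos.mpr (fun hxy => hyx hxy.symm)
    have : |v x - v y| / dist x y ^ ((n:ℝ) + s) ≤ 0 := by
      simpa [ker, ENNReal.ofReal_eq_zero] using hy
    have : |v x - v y| ≤ 0 := by
      by_contra habs
      push_neg at habs
      exact absurd this (not_le.mpr (div_pos habs hd))
    have := abs_nonpos_iff.mp this
    linarith [sub_eq_zero.mp this]
  have hsub : Ωᶜ ⊆ {y | v y ≠ v x} := by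
    intro y hy
    simp only [mem_setOf_eq]
    rw [hzero y hy]
    exact fun h0 => hvx h0.symm
  have : volume {y | v y ≠ v x} = 0 := by
    have := h3
    rw [ae_iff] at this
    simpa using this
  exact hΩ (measure_mono_null hsub this)

lemma pairing {G : EuclideanSpace ℝ (Fin n) → ℝ≥0∞} (hG : Measurable G)
    {w : EuclideanSpace ℝ (Fin n) → ℝ} (hw : Measurable w) (hw0 : ∀ x, 0 ≤ w x) :
    ∫⁻ x, G x * ENNReal.ofReal (w x)
      = ∫⁻ t in Ioi (0:ℝ), ∫⁻ x in {x | t < w x}, G x := by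
  set H : EuclideanSpace ℝ (Fin n) × ℝ → ℝ≥0∞ :=
    fun p => {q : EuclideanSpace ℝ (Fin n) × ℝ | q.2 < w q.1}.indicator (fun q => G q.1) p with hH
  have hSmeas : MeasurableSet {q : EuclideanSpace ℝ (Fin n) × ℝ | q.2 < w q.1} :=
    measurableSet_lt measurable_snd (hw.comp measurable_fst)
  have hHmeas : Measurable H := (hG.comp measurable_fst).indicator hSmeas
  have step1 : ∀ x, ∫⁻ t in Ioi (0:ℝ), H (x, t) = G x * ENNReal.ofReal (w x) := by
    intro x
    have : ∀ t, H (x, t) = (Iio (w x)).indicator (fun _ => G x) t := by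
      intro t
      simp only [hH, indicator, mem_setOf_eq, mem_Iio]
    rw [lintegral_congr this, lintegral_indicator_const measurableSet_Iio]
    rw [Measure.restrict_apply measurableSet_Iio]
    have : Iio (w x) ∩ Ioi 0 = Ioo 0 (w x) := by
      ext t; simp [mem_Ioo, and_comm]
    rw [this, Real.volume_Ioo, sub_zero]
  have step2 : ∀ t, ∫⁻ x, H (x, t) = ∫⁻ x in {x | t < w x}, G x := by
    intro t
    have hmeas : MeasurableSet {x : EuclideanSpace ℝ (Fin n) | t < w x} :=
      measurableSet_lt measurable_const hw
    rw [← lintegral_indicator hmeas]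
    exact lintegral_congr fun x => by simp only [hH, indicator, mem_setOf_eq]
  calc ∫⁻ x, G x * ENNReal.ofReal (w x)
      = ∫⁻ x, ∫⁻ t in Ioi (0:ℝ), H (x, t) := by
        exact (lintegral_congr step1).symm
    _ = ∫⁻ t in Ioi (0:ℝ), ∫⁻ x, H (x, t) :=
        lintegral_lintegral_swap (hHmeas.aemeasurable)
    _ = ∫⁻ t in Ioi (0:ℝ), ∫⁻ x in {x | t < w x}, G x :=
        lintegral_congr step2


lemma double_swap {α β : Type*} [MeasurableSpace α] [MeasurableSpace β]
    {μ : Measure α} {ν : Measure β} [SFinite μ] [SFinite ν]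
    {A : α × α → β → ℝ≥0∞}
    (hA : Measurable (fun q : (α × α) × β => A q.1 q.2)) :
    ∫⁻ t, ∫⁻ x, ∫⁻ y, A (x, y) t ∂μ ∂μ ∂ν = ∫⁻ x, ∫⁻ y, ∫⁻ t, A (x, y) t ∂ν ∂μ ∂μ := by
  have h1 : Measurable (fun q : α × β => ∫⁻ y, A (q.1, y) q.2 ∂μ) := by
    apply Measurable.lintegral_prod_right'
      (f := fun q : (α × β) × α => A (q.1.1, q.2) q.1.2)
    exact hA.comp (((measurable_fst.comp measurable_fst).prodMk measurable_snd).prodMk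
      (measurable_snd.comp measurable_fst))
  calc ∫⁻ t, ∫⁻ x, ∫⁻ y, A (x, y) t ∂μ ∂μ ∂ν
      = ∫⁻ x, ∫⁻ t, ∫⁻ y, A (x, y) t ∂μ ∂ν ∂μ := by
        exact lintegral_lintegral_swap (f := fun t x => ∫⁻ y, A (x, y) t ∂μ)
          ((h1.comp measurable_swap).aemeasurable)
    _ = ∫⁻ x, ∫⁻ y, ∫⁻ t, A (x, y) t ∂ν ∂μ ∂μ := by
        apply lintegral_congr; intro x
        exact lintegral_lintegral_swap (f := fun t y => A (x, y) t)
          ((hA.comp ((measurable_const.prodMk measurable_snd).prodMk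
            measurable_fst)).aemeasurable)

lemma coarea {w : EuclideanSpace ℝ (Fin n) → ℝ} (hw : Measurable w) (hw0 : ∀ x, 0 ≤ w x) :
    ∫⁻ t in Ioi (0:ℝ), gag1 n s ({x | t < w x}.indicator (fun _ => (1:ℝ)))
      = gag1 n s w := by
  classical
  -- the three-variable kernel
  set A : EuclideanSpace ℝ (Fin n) × EuclideanSpace ℝ (Fin n) → ℝ → ℝ≥0∞ :=
    fun p t => ENNReal.ofReal
      (|({x | t < w x}.indicator (fun _ => (1:ℝ))) p.1
        - ({x | t < w x}.indicator (fun _ => (1:ℝ))) p.2| / dist p.1 p.2 ^ ((n:ℝ) + s)) with hA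
  -- pointwise identity in (x, y)
  have hpt : ∀ p : EuclideanSpace ℝ (Fin n) × EuclideanSpace ℝ (Fin n),
      ∫⁻ t in Ioi (0:ℝ), A p t = ker n s w p := by
    intro ⟨x, y⟩
    set m := min (w x) (w y) with hm
    set M := max (w x) (w y) with hM
    have hind : ∀ t, A (x, y) t
        = (Ico m M).indicator (fun _ => ENNReal.ofReal (1 / dist x y ^ ((n:ℝ) + s))) t := by
      intro t
      have hm0 : 0 ≤ m := le_min (hw0 x) (hw0 y)
      by_cases ht : t ∈ Ico m M
      · have : |({x | t < w x}.indicator (fun _ => (1:ℝ))) x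
            - ({x | t < w x}.indicator (fun _ => (1:ℝ))) y| = 1 := by
          obtain ⟨ht1, ht2⟩ := ht
          rcases le_total (w x) (w y) with hc | hc
          · have h1 : ¬ t < w x := not_lt.mpr (by simp [hm, min_eq_left hc] at ht1; exact ht1)
            have h2 : t < w y := by simp [hM, max_eq_right hc] at ht2; exact ht2
            simp [indicator, h1, h2]
          · have h1 : t < w x := by simp [hM, max_eq_left hc] at ht2; exact ht2
            have h2 : ¬ t < w y := not_lt.mpr (by simp [hm, min_eq_right hc] at ht1; exact ht1)
            simp [indicator, h1, h2]
        rw [indicator_of_mem ht]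
        simp only [hA, this]
      · have : |({x | t < w x}.indicator (fun _ => (1:ℝ))) x
            - ({x | t < w x}.indicator (fun _ => (1:ℝ))) y| = 0 := by
          rw [mem_Ico, not_and_or, not_le, not_lt] at ht
          rcases ht with ht | ht
          · -- t < m : both indicators are 1
            have h1 : t < w x := lt_of_lt_of_le ht (min_le_left _ _)
            have h2 : t < w y := lt_of_lt_of_le ht (min_le_right _ _)
            simp [indicator, h1, h2]
          · -- M ≤ t : both indicators are 0
            have h1 : ¬ t < w x := not_lt.mpr (le_trans (le_max_left _ _) ht)
            have h2 : ¬ t < w y := not_lt.mpr (le_trans (le_max_right _ _) ht)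
            simp [indicator, h1, h2]
        rw [indicator_of_notMem ht]
        simp only [hA, this, zero_div, ENNReal.ofReal_zero]
    rw [lintegral_congr hind, lintegral_indicator_const measurableSet_Ico]
    rw [Measure.restrict_apply measurableSet_Ico]
    have hm0 : 0 ≤ m := le_min (hw0 x) (hw0 y)
    have hvol : volume (Ico m M ∩ Ioi 0) = ENNReal.ofReal (M - m) := by
      rcases eq_or_lt_of_le hm0 with hm' | hm'
      · have : Ico m M ∩ Ioi 0 = Ioo 0 M := by
          rw [← hm']
          ext t
          simp only [mem_inter_iff, mem_Ico, mem_Ioi, mem_Ioo]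
          constructor
          · rintro ⟨⟨_, h2⟩, h3⟩; exact ⟨h3, h2⟩
          · rintro ⟨h3, h2⟩; exact ⟨⟨h3.le, h2⟩, h3⟩
        rw [this, Real.volume_Ioo, ← hm', sub_zero]
      · have : Ico m M ∩ Ioi 0 = Ico m M := by
          apply inter_eq_left.mpr
          intro t ht; exact lt_of_lt_of_le hm' ht.1
        rw [this, Real.volume_Ico]
    rw [hvol, ← ENNReal.ofReal_mul (by positivity)]
    unfold ker
    simp only
    congr 1
    rw [one_div_mul_eq_div]
    rw [hM, hm, max_sub_min_eq_abs, abs_sub_comm]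
  -- measurability of the kernel in all variables
  have hAmeas : Measurable (fun q : (EuclideanSpace ℝ (Fin n) × EuclideanSpace ℝ (Fin n)) × ℝ
      => A q.1 q.2) := by
    apply ENNReal.measurable_ofReal.comp
    apply Measurable.div
    · apply Measurable.abs
      apply Measurable.sub
      · have : (fun q : (EuclideanSpace ℝ (Fin n) × EuclideanSpace ℝ (Fin n)) × ℝ =>
            ({x | q.2 < w x}.indicator (fun _ => (1:ℝ))) q.1.1)
            = {q : (EuclideanSpace ℝ (Fin n) × EuclideanSpace ℝ (Fin n)) × ℝ
              | q.2 < w q.1.1}.indicator (fun _ => (1:ℝ)) := by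
          ext q; simp [indicator]
        rw [this]
        exact measurable_const.indicator
          (measurableSet_lt measurable_snd (hw.comp (measurable_fst.comp measurable_fst)))
      · have : (fun q : (EuclideanSpace ℝ (Fin n) × EuclideanSpace ℝ (Fin n)) × ℝ =>
            ({x | q.2 < w x}.indicator (fun _ => (1:ℝ))) q.1.2)
            = {q : (EuclideanSpace ℝ (Fin n) × EuclideanSpace ℝ (Fin n)) × ℝ
              | q.2 < w q.1.2}.indicator (fun _ => (1:ℝ)) := by
          ext q; simp [indicator]
        rw [this]
        exact measurable_const.indicator
          (measurableSet_lt measurable_snd (hw.comp (measurable_snd.comp measurable_fst)))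
    · exact (measurable_dist.comp measurable_fst).pow_const _
  -- now the double swap
  have swap1 : ∫⁻ t in Ioi (0:ℝ), gag1 n s ({x | t < w x}.indicator (fun _ => (1:ℝ)))
      = ∫⁻ t in Ioi (0:ℝ), ∫⁻ x, ∫⁻ y, A (x, y) t := by
    apply lintegral_congr; intro t; rfl
  rw [swap1, double_swap hAmeas]
  apply lintegral_congr; intro x
  apply lintegral_congr; intro y
  exact hpt (x, y)

/-- The isoperimetric constant. -/
def isoC (n : ℕ) (s : ℝ) : ℝ :=
  ((2:ℝ) ^ (n:ℝ) - 1) / 2 ^ ((n:ℝ) + s)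
    * (volume (Metric.ball (0 : EuclideanSpace ℝ (Fin n)) 1)).toReal ^ (1 + s / (n:ℝ))

lemma isoC_pos (hn : 1 ≤ n) (hs0 : 0 < s) : 0 < isoC n s := by
  haveI : Nontrivial (EuclideanSpace ℝ (Fin n)) :=
    Module.nontrivial_of_finrank_pos (R := ℝ)
      (by rw [finrank_euclideanSpace_fin]; omega)
  have hω : 0 < (volume (Metric.ball (0 : EuclideanSpace ℝ (Fin n)) 1)).toReal :=
    ENNReal.toReal_pos (Metric.measure_ball_pos volume 0 one_pos).ne' measure_ball_lt_top.ne
  have h2 : (2:ℝ) ^ (1:ℝ) ≤ (2:ℝ) ^ (n:ℝ) := by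
    apply Real.rpow_le_rpow_of_exponent_le one_le_two
    exact_mod_cast hn
  have : (0:ℝ) < (2:ℝ) ^ (n:ℝ) - 1 := by
    rw [Real.rpow_one] at h2; linarith
  have hp : (0:ℝ) < (2:ℝ) ^ ((n:ℝ) + s) := Real.rpow_pos_of_pos two_pos _
  have h3 : (0:ℝ) < (volume (Metric.ball (0 : EuclideanSpace ℝ (Fin n)) 1)).toReal
      ^ (1 + s / (n:ℝ)) := Real.rpow_pos_of_pos hω _
  exact mul_pos (div_pos this hp) h3

lemma inner_bound (hn : 1 ≤ n) (hs0 : 0 < s) {E : Set (EuclideanSpace ℝ (Fin n))}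
    (hE : MeasurableSet E) (hfin : volume E ≠ ⊤) {ρ : ℝ} (hρ : 0 < ρ)
    (hvolE : volume E = volume (Metric.ball (0 : EuclideanSpace ℝ (Fin n)) ρ))
    (x : EuclideanSpace ℝ (Fin n)) :
    ENNReal.ofReal (1 / (2*ρ) ^ ((n:ℝ)+s))
        * (volume (Metric.ball x (2*ρ)) - volume (Metric.ball x ρ))
      ≤ ∫⁻ y in Eᶜ, ENNReal.ofReal (1 / dist x y ^ ((n:ℝ)+s)) := by
  haveI : Nontrivial (EuclideanSpace ℝ (Fin n)) :=
    Module.nontrivial_of_finrank_pos (R := ℝ)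
      (by rw [finrank_euclideanSpace_fin]; omega)
  set c := (n:ℝ) + s with hc
  have hcpos : 0 < c := by positivity
  set g : EuclideanSpace ℝ (Fin n) → ℝ≥0∞ :=
    fun y => ENNReal.ofReal (1 / dist x y ^ c) with hg
  set B := Metric.ball x ρ with hB
  have hBmeas : MeasurableSet B := Metric.isOpen_ball.measurableSet
  have hBvol : volume B = volume E := by
    rw [hvolE, hB, Measure.addHaar_ball volume x hρ.le, Measure.addHaar_ball volume 0 hρ.le]
  have hBfin : volume B ≠ ⊤ := by rw [hBvol]; exact hfin
  -- Key 3 : μ(Eᶜ ∩ B) = μ(E ∩ Bᶜ) i.e. μ(B \ E) = μ(E \ B)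
  have key3 : volume (B \ E) = volume (E \ B) := by
    have e1 : volume (B ∩ E) + volume (B \ E) = volume B := measure_inter_add_diff B hE
    have e2 : volume (E ∩ B) + volume (E \ B) = volume E := measure_inter_add_diff E hBmeas
    rw [inter_comm] at e2
    have hfinBE : volume (B ∩ E) ≠ ⊤ := fun h =>
      hBfin (eq_top_iff.mpr (h ▸ measure_mono inter_subset_left))
    have : volume (B ∩ E) + volume (B \ E) = volume (B ∩ E) + volume (E \ B) := by
      rw [e1, e2, hBvol]
    exact ENNReal.add_right_inj hfinBE |>.mp this
  -- Key 1 : lower bound on B \ E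
  have key1 : ENNReal.ofReal (1 / ρ ^ c) * volume (B \ E) ≤ ∫⁻ y in B \ E, g y := by
    have hsing : volume ((B \ E) \ {x}) = volume (B \ E) :=
      measure_diff_null (measure_singleton x)
    have : ∫⁻ y in (B \ E) \ {x}, g y ≤ ∫⁻ y in B \ E, g y :=
      lintegral_mono' (Measure.restrict_mono diff_subset le_rfl) le_rfl
    refine le_trans ?_ this
    have hmeas : MeasurableSet ((B \ E) \ {x}) :=
      ((hBmeas.diff hE).diff (measurableSet_singleton x))
    rw [← hsing, ← setLIntegral_const ((B \ E) \ {x}) (ENNReal.ofReal (1 / ρ ^ c))]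
    apply setLIntegral_mono' hmeas
    intro y hy
    apply ENNReal.ofReal_le_ofReal
    have hd0 : 0 < dist x y := by
      rw [dist_pos]
      exact fun hxy => hy.2 (by simp [hxy.symm])
    have hdρ : dist x y < ρ := by
      have := hy.1.1
      rwa [hB, Metric.mem_ball, dist_comm] at this
    apply one_div_le_one_div_of_le
    · exact Real.rpow_pos_of_pos hd0 c
    · exact Real.rpow_le_rpow dist_nonneg hdρ.le hcpos.le
  -- Key 2 : upper bound on E \ B
  have key2 : ∫⁻ y in E \ B, g y ≤ ENNReal.ofReal (1 / ρ ^ c) * volume (E \ B) := by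
    rw [← setLIntegral_const (E \ B) (ENNReal.ofReal (1 / ρ ^ c))]
    apply setLIntegral_mono' (hE.diff hBmeas)
    intro y hy
    apply ENNReal.ofReal_le_ofReal
    have hdρ : ρ ≤ dist x y := by
      have := hy.2
      rw [hB, Metric.mem_ball, dist_comm] at this
      linarith [not_lt.mp this]
    apply one_div_le_one_div_of_le
    · exact Real.rpow_pos_of_pos hρ c
    · exact Real.rpow_le_rpow hρ.le hdρ hcpos.le
  -- rearrangement: ∫_{Eᶜ} g ≥ ∫_{Bᶜ} g
  have rearr : ∫⁻ y in Bᶜ, g y ≤ ∫⁻ y in Eᶜ, g y := by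
    rw [← lintegral_inter_add_diff g Eᶜ hBmeas, ← lintegral_inter_add_diff g Bᶜ hE]
    have hide1 : Eᶜ ∩ B = B \ E := by rw [diff_eq, inter_comm]
    have hide2 : Eᶜ \ B = Bᶜ \ E := by
      rw [diff_eq, diff_eq, inter_comm]
    have hide3 : Bᶜ ∩ E = E \ B := by rw [diff_eq, inter_comm]
    rw [hide1, hide2, hide3]
    refine add_le_add ?_ le_rfl
    calc ∫⁻ y in E \ B, g y ≤ ENNReal.ofReal (1 / ρ ^ c) * volume (E \ B) := key2
      _ = ENNReal.ofReal (1 / ρ ^ c) * volume (B \ E) := by rw [key3]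
      _ ≤ ∫⁻ y in B \ E, g y := key1
  refine le_trans ?_ rearr
  -- lower bound ∫_{Bᶜ} g on the annulus
  have hann : Metric.ball x (2*ρ) \ B ⊆ Bᶜ := fun y hy => hy.2
  have : ∫⁻ y in Metric.ball x (2*ρ) \ B, g y ≤ ∫⁻ y in Bᶜ, g y :=
    lintegral_mono' (Measure.restrict_mono hann le_rfl) le_rfl
  refine le_trans ?_ this
  have hannvol : volume (Metric.ball x (2*ρ)) - volume B
      = volume (Metric.ball x (2*ρ) \ B) := by
    rw [measure_diff _ hBmeas.nullMeasurableSet hBfin]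
    exact Metric.ball_subset_ball (by linarith)
  rw [hannvol, ← setLIntegral_const (Metric.ball x (2*ρ) \ B)]
  apply setLIntegral_mono' (Metric.isOpen_ball.measurableSet.diff hBmeas)
  intro y hy
  apply ENNReal.ofReal_le_ofReal
  have hd0 : ρ ≤ dist x y := by
    have := hy.2
    rw [hB, Metric.mem_ball, dist_comm] at this
    linarith [not_lt.mp this]
  have hd2 : dist x y < 2*ρ := by
    have := hy.1
    rwa [Metric.mem_ball, dist_comm] at this
  apply one_div_le_one_div_of_le
  · exact Real.rpow_pos_of_pos (lt_of_lt_of_le hρ hd0) c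
  · exact Real.rpow_le_rpow dist_nonneg hd2.le hcpos.le

lemma setLIntegral_le_lintegral' {f : EuclideanSpace ℝ (Fin n) → ℝ≥0∞}
    (S : Set (EuclideanSpace ℝ (Fin n))) : ∫⁻ y in S, f y ≤ ∫⁻ y, f y :=
  lintegral_mono' Measure.restrict_le_self le_rfl

lemma isop (hn : 1 ≤ n) (hs0 : 0 < s) (hs1 : s < 1) {E : Set (EuclideanSpace ℝ (Fin n))}
    (hE : MeasurableSet E) (hfin : volume E ≠ ⊤) :
    ENNReal.ofReal (isoC n s) * volume E ^ (((n:ℝ) - s) / (n:ℝ))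
      ≤ gag1 n s (E.indicator fun _ => (1:ℝ)) := by
  haveI : Nontrivial (EuclideanSpace ℝ (Fin n)) :=
    Module.nontrivial_of_finrank_pos (R := ℝ)
      (by rw [finrank_euclideanSpace_fin]; omega)
  have hnR : (0:ℝ) < n := by exact_mod_cast Nat.lt_of_lt_of_le Nat.zero_lt_one hn
  have hns : s < (n:ℝ) := lt_of_lt_of_le hs1 (by exact_mod_cast hn)
  rcases eq_or_ne (volume E) 0 with h0 | h0
  · rw [h0, ENNReal.zero_rpow_of_pos (div_pos (by linarith) hnR), mul_zero]
    exact zero_le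
  set ω : ℝ≥0∞ := volume (Metric.ball (0 : EuclideanSpace ℝ (Fin n)) 1) with hωdef
  have hωfin : ω ≠ ⊤ := measure_ball_lt_top.ne
  have hωpos : ω ≠ 0 := (Metric.measure_ball_pos volume 0 one_pos).ne'
  set ωr := ω.toReal with hωr_def
  have hωr : 0 < ωr := ENNReal.toReal_pos hωpos hωfin
  set A := (volume E).toReal with hAdef
  have hA : 0 < A := ENNReal.toReal_pos h0 hfin
  set ρ := (A/ωr) ^ (1/(n:ℝ)) with hρdef
  have hρ : 0 < ρ := Real.rpow_pos_of_pos (div_pos hA hωr) _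
  have e3 : ρ ^ (n:ℝ) = A / ωr := by
    rw [hρdef, ← Real.rpow_mul (div_pos hA hωr).le,
      one_div_mul_cancel (ne_of_gt hnR), Real.rpow_one]
  have hballρ : ∀ x : EuclideanSpace ℝ (Fin n),
      volume (Metric.ball x ρ) = ENNReal.ofReal (A/ωr) * ω := by
    intro x
    rw [Measure.addHaar_ball volume x hρ.le, finrank_euclideanSpace_fin,
      ← Real.rpow_natCast ρ n, e3]
  have hvolE : volume E = volume (Metric.ball (0 : EuclideanSpace ℝ (Fin n)) ρ) := by
    rw [hballρ, ← ENNReal.ofReal_toReal hωfin, ← hωr_def,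
      ← ENNReal.ofReal_mul (by positivity : (0:ℝ) ≤ A/ωr),
      div_mul_cancel₀ _ (ne_of_gt hωr)]
    exact (ENNReal.ofReal_toReal hfin).symm
  -- the annulus volume
  have hann : ∀ x : EuclideanSpace ℝ (Fin n),
      volume (Metric.ball x (2*ρ)) - volume (Metric.ball x ρ)
        = ENNReal.ofReal (((2*ρ)^((n:ℝ)) - ρ^((n:ℝ))) * ωr) := by
    intro x
    have h2 : volume (Metric.ball x (2*ρ)) = ENNReal.ofReal ((2*ρ)^((n:ℝ)) * ωr) := by
      rw [Measure.addHaar_ball volume x (by positivity : (0:ℝ) ≤ 2*ρ),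
        finrank_euclideanSpace_fin, ← Real.rpow_natCast (2*ρ) n, ← hωdef,
        ← ENNReal.ofReal_toReal hωfin, ← hωr_def,
        ← ENNReal.ofReal_mul (by positivity : (0:ℝ) ≤ (2*ρ)^((n:ℝ)))]
    have h1 : volume (Metric.ball x ρ) = ENNReal.ofReal (ρ^((n:ℝ)) * ωr) := by
      rw [hballρ, ← e3, ← ENNReal.ofReal_toReal hωfin, ← hωr_def,
        ← ENNReal.ofReal_mul (by positivity : (0:ℝ) ≤ ρ^((n:ℝ)))]
    rw [h2, h1, ← ENNReal.ofReal_sub _ (by positivity : (0:ℝ) ≤ ρ^((n:ℝ)) * ωr)]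
    congr 1
    ring
  -- kernel on E × Eᶜ
  have hker : ∀ x ∈ E, ∀ᵐ y ∂(volume.restrict Eᶜ),
      ENNReal.ofReal (1 / dist x y ^ ((n:ℝ)+s))
        = ker n s (E.indicator fun _ => (1:ℝ)) (x, y) := by
    intro x hx
    filter_upwards [ae_restrict_mem hE.compl] with y hy
    unfold ker
    simp only [indicator_of_mem hx, indicator_of_notMem hy, sub_zero, abs_one]
  -- main lower bound
  have step : ∀ x ∈ E,
      ENNReal.ofReal (1/(2*ρ)^((n:ℝ)+s)) * ENNReal.ofReal (((2*ρ)^((n:ℝ)) - ρ^((n:ℝ))) * ωr)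
        ≤ ∫⁻ y, ker n s (E.indicator fun _ => (1:ℝ)) (x, y) := by
    intro x hx
    rw [← hann x]
    refine le_trans (inner_bound hn hs0 hE hfin hρ hvolE x) ?_
    calc ∫⁻ y in Eᶜ, ENNReal.ofReal (1 / dist x y ^ ((n:ℝ)+s))
        = ∫⁻ y in Eᶜ, ker n s (E.indicator fun _ => (1:ℝ)) (x, y) :=
          lintegral_congr_ae (hker x hx)
      _ ≤ _ := setLIntegral_le_lintegral' _
  have glb : ENNReal.ofReal A
      * (ENNReal.ofReal (1/(2*ρ)^((n:ℝ)+s))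
          * ENNReal.ofReal (((2*ρ)^((n:ℝ)) - ρ^((n:ℝ))) * ωr))
      ≤ gag1 n s (E.indicator fun _ => (1:ℝ)) := by
    rw [gag1_eq_ker]
    calc ENNReal.ofReal A * (ENNReal.ofReal (1/(2*ρ)^((n:ℝ)+s))
          * ENNReal.ofReal (((2*ρ)^((n:ℝ)) - ρ^((n:ℝ))) * ωr))
        = (ENNReal.ofReal (1/(2*ρ)^((n:ℝ)+s))
          * ENNReal.ofReal (((2*ρ)^((n:ℝ)) - ρ^((n:ℝ))) * ωr)) * volume E := by
          rw [mul_comm, hAdef, ENNReal.ofReal_toReal hfin]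
      _ = ∫⁻ _x in E, (ENNReal.ofReal (1/(2*ρ)^((n:ℝ)+s))
          * ENNReal.ofReal (((2*ρ)^((n:ℝ)) - ρ^((n:ℝ))) * ωr)) := (setLIntegral_const _ _).symm
      _ ≤ ∫⁻ x in E, ∫⁻ y, ker n s (E.indicator fun _ => (1:ℝ)) (x, y) := by
          apply setLIntegral_mono' hE
          intro x hx
          exact step x hx
      _ ≤ ∫⁻ x, ∫⁻ y, ker n s (E.indicator fun _ => (1:ℝ)) (x, y) :=
          setLIntegral_le_lintegral' _
  refine le_trans (le_of_eq ?_) glb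
  -- now the numeric identity
  have hVE : volume E = ENNReal.ofReal A := (ENNReal.ofReal_toReal hfin).symm
  rw [hVE, ENNReal.ofReal_rpow_of_pos hA,
    ← ENNReal.ofReal_mul (isoC_pos hn hs0).le,
    ← ENNReal.ofReal_mul (by positivity : (0:ℝ) ≤ 1/(2*ρ)^((n:ℝ)+s)),
    ← ENNReal.ofReal_mul hA.le]
  congr 1
  -- real identity
  have hAe : A ^ (((n:ℝ) - s)/(n:ℝ)) = A / A ^ (s/(n:ℝ)) := by
    rw [eq_div_iff (ne_of_gt (Real.rpow_pos_of_pos hA _)), ← Real.rpow_add hA,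
      ← add_div, sub_add_cancel, div_self (ne_of_gt hnR), Real.rpow_one]
  have e4 : ρ ^ s = A ^ (s/(n:ℝ)) / ωr ^ (s/(n:ℝ)) := by
    rw [hρdef, ← Real.rpow_mul (div_pos hA hωr).le, one_div_mul_eq_div,
      Real.div_rpow hA.le hωr.le]
  have e5 : (2*ρ) ^ ((n:ℝ)+s) = 2 ^ ((n:ℝ)+s) * (ρ ^ (n:ℝ) * ρ ^ s) := by
    rw [Real.mul_rpow (by norm_num) hρ.le, ← Real.rpow_add hρ]
  have e6 : (2*ρ) ^ ((n:ℝ)) = 2 ^ ((n:ℝ)) * ρ ^ (n:ℝ) :=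
    Real.mul_rpow (by norm_num) hρ.le
  have e7 : ωr ^ (1 + s/(n:ℝ)) = ωr * ωr ^ (s/(n:ℝ)) := by
    rw [Real.rpow_add hωr, Real.rpow_one]
  have p1 : A ^ (s/(n:ℝ)) ≠ 0 := ne_of_gt (Real.rpow_pos_of_pos hA _)
  have p2 : ωr ^ (s/(n:ℝ)) ≠ 0 := ne_of_gt (Real.rpow_pos_of_pos hωr _)
  have p3 : (2:ℝ) ^ ((n:ℝ)+s) ≠ 0 := ne_of_gt (Real.rpow_pos_of_pos two_pos _)
  have p4 : ρ ^ (n:ℝ) ≠ 0 := ne_of_gt (Real.rpow_pos_of_pos hρ _)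
  unfold isoC
  rw [← hωdef, ← hωr_def, e5, e6, hAe, e4, e7, e3]
  field_simp

lemma energy_ineq {Ω : Set (EuclideanSpace ℝ (Fin n))}
    {f u : EuclideanSpace ℝ (Fin n) → ℝ}
    (hfae : AEStronglyMeasurable f (volume.restrict Ω))
    (hu : Adm n s Ω f u)
    (hmin : ∀ v, Adm n s Ω f v → F1 n s Ω f u ≤ F1 n s Ω f v)
    {k : ℝ} (hk : 0 < k) :
    (gag1 n s (fun x => u x - tk k (u x))).toReal
      ≤ 2 * ∫ x in Ω, f x * (u x - tk k (u x)) := by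
  obtain ⟨humeas, huzero, hufin, hufint⟩ := hu
  have htk : Measurable (fun x => tk k (u x)) := measurable_tk_comp humeas k
  have hadd := gag1_add_trunc (s := s) humeas k
  have hTfin : gag1 n s (fun x => tk k (u x)) ≠ ⊤ := by
    refine ne_top_of_le_ne_top hufin ?_
    rw [hadd]; exact le_self_add
  have hGfin : gag1 n s (fun x => u x - tk k (u x)) ≠ ⊤ := by
    refine ne_top_of_le_ne_top hufin ?_
    rw [hadd]; exact le_add_self
  have hTint : IntegrableOn (fun x => f x * tk k (u x)) Ω := by
    apply Integrable.mono hufint (hfae.mul htk.aestronglyMeasurable)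
    apply ae_of_all
    intro x
    simp only [Pi.mul_apply, norm_mul, Real.norm_eq_abs, abs_mul]
    exact mul_le_mul_of_nonneg_left (abs_tk_le hk.le _) (abs_nonneg _)
  have hTadm : Adm n s Ω f (fun x => tk k (u x)) := by
    refine ⟨htk, fun x hx => by simp only [huzero x hx, tk_zero hk.le], hTfin, hTint⟩
  have hF := hmin _ hTadm
  unfold F1 at hF
  have htoReal : (gag1 n s u).toReal
      = (gag1 n s (fun x => tk k (u x))).toReal
        + (gag1 n s (fun x => u x - tk k (u x))).toReal := by
    rw [hadd, ENNReal.toReal_add hTfin hGfin]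
  have hsub : ∫ x in Ω, f x * (u x - tk k (u x))
      = (∫ x in Ω, f x * u x) - ∫ x in Ω, f x * tk k (u x) := by
    rw [← integral_sub hufint hTint]
    apply integral_congr_ae
    apply ae_of_all
    intro x
    ring
  rw [hsub]
  rw [htoReal] at hF
  linarith

lemma key_lower (hn : 1 ≤ n) (hs0 : 0 < s) (hs1 : s < 1)
    {Ω : Set (EuclideanSpace ℝ (Fin n))} (hΩm : MeasurableSet Ω) (hΩfin : volume Ω ≠ ⊤)
    {f u : EuclideanSpace ℝ (Fin n) → ℝ} (hfm : Measurable f)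
    (hu : Adm n s Ω f u)
    (hmin : ∀ v, Adm n s Ω f v → F1 n s Ω f u ≤ F1 n s Ω f v)
    {k : ℝ} (hk : 0 < k)
    (hne : gag1 n s (fun x => u x - tk k (u x)) ≠ 0) :
    ENNReal.ofReal (isoC n s) / 2
      ≤ (∫⁻ x in {x | k < |u x|}, (ENNReal.ofReal |f x|) ^ ((n:ℝ)/s)) ^ (s/(n:ℝ)) := by
  obtain ⟨humeas, huzero, hufin, hufint⟩ := hu
  have hnR : (0:ℝ) < n := by exact_mod_cast Nat.lt_of_lt_of_le Nat.zero_lt_one hn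
  have hns : s < (n:ℝ) := lt_of_lt_of_le hs1 (by exact_mod_cast hn)
  set v : EuclideanSpace ℝ (Fin n) → ℝ := fun x => u x - tk k (u x) with hvdef
  have hvmeas : Measurable v := humeas.sub (measurable_tk_comp humeas k)
  have hwmeas : Measurable (fun x => |v x|) := hvmeas.abs
  set p : ℝ := (n:ℝ)/s with hpdef
  set q : ℝ := (n:ℝ)/((n:ℝ) - s) with hqdef
  have hp1 : 1 < p := (one_lt_div hs0).mpr hns
  have hpq : p.HolderConjugate q := by
    have hns' : (n:ℝ) - s ≠ 0 := by linarith
    rw [Real.holderConjugate_iff_eq_conjExponent hp1, hqdef, hpdef]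
    field_simp
  set Ak : Set (EuclideanSpace ℝ (Fin n)) := {x | k < |u x|} with hAkdef
  have hAkm : MeasurableSet Ak := measurableSet_lt measurable_const humeas.abs
  have hAksub : Ak ⊆ Ω := by
    intro x hx
    by_contra hxo
    rw [hAkdef, mem_setOf_eq, huzero x hxo, abs_zero] at hx
    exact absurd (hk.trans hx) (lt_irrefl 0)
  have hvsupp : ∀ x, x ∉ Ak → v x = 0 := by
    intro x hx
    rw [hAkdef, mem_setOf_eq, not_lt] at hx
    exact (gk_eq_zero_iff hk.le).mpr hx
  set Nf : ℝ≥0∞ := (∫⁻ x in Ak, (ENNReal.ofReal |f x|) ^ p) ^ (1/p) with hNfdef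
  set G : EuclideanSpace ℝ (Fin n) → ℝ≥0∞ := fun x => ENNReal.ofReal |f x| with hGdef
  have hGmeas : Measurable G := ENNReal.measurable_ofReal.comp hfm.abs
  -- finiteness of gag1 v
  have hGfin : gag1 n s v ≠ ⊤ := by
    refine ne_top_of_le_ne_top hufin ?_
    rw [gag1_add_trunc (s := s) humeas k]; exact le_add_self
  -- integrability of f * v
  have hvint : IntegrableOn (fun x => f x * v x) Ω := by
    have hTint : IntegrableOn (fun x => f x * tk k (u x)) Ω := by
      apply Integrable.mono hufint (hfm.aestronglyMeasurable.mul
        (measurable_tk_comp humeas k).aestronglyMeasurable)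
      apply ae_of_all
      intro x
      simp only [Pi.mul_apply, norm_mul, Real.norm_eq_abs, abs_mul]
      exact mul_le_mul_of_nonneg_left (abs_tk_le hk.le _) (abs_nonneg _)
    have : (fun x => f x * v x) = fun x => f x * u x - f x * tk k (u x) := by
      funext x; rw [hvdef]; ring
    rw [this]
    exact hufint.sub hTint
  -- step 1 : energy inequality in ℝ≥0∞
  have step1 : gag1 n s v ≤ 2 * ENNReal.ofReal (∫ x in Ω, f x * v x) := by
    have h1 := energy_ineq hfm.aestronglyMeasurable ⟨humeas, huzero, hufin, hufint⟩ hmin hk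
    calc gag1 n s v = ENNReal.ofReal ((gag1 n s v).toReal) :=
          (ENNReal.ofReal_toReal hGfin).symm
      _ ≤ ENNReal.ofReal (2 * ∫ x in Ω, f x * v x) := ENNReal.ofReal_le_ofReal h1
      _ = 2 * ENNReal.ofReal (∫ x in Ω, f x * v x) := by
          rw [ENNReal.ofReal_mul (by norm_num : (0:ℝ) ≤ 2), ENNReal.ofReal_ofNat]
  -- step 2 : the integral is at most ∫⁻ G * |v|
  have step2 : ENNReal.ofReal (∫ x in Ω, f x * v x)
      ≤ ∫⁻ x, G x * ENNReal.ofReal |v x| := by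
    have h1 : ∫ x in Ω, f x * v x ≤ ∫ x in Ω, |f x * v x| :=
      integral_mono hvint hvint.abs (fun x => le_abs_self _)
    have h2 : ENNReal.ofReal (∫ x in Ω, |f x * v x|)
        = ∫⁻ x in Ω, ENNReal.ofReal |f x * v x| :=
      ofReal_integral_eq_lintegral_ofReal hvint.abs (ae_of_all _ fun x => abs_nonneg _)
    calc ENNReal.ofReal (∫ x in Ω, f x * v x)
        ≤ ENNReal.ofReal (∫ x in Ω, |f x * v x|) := ENNReal.ofReal_le_ofReal h1
      _ = ∫⁻ x in Ω, ENNReal.ofReal |f x * v x| := h2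
      _ = ∫⁻ x in Ω, G x * ENNReal.ofReal |v x| := by
          apply lintegral_congr
          intro x
          rw [hGdef, abs_mul, ENNReal.ofReal_mul (abs_nonneg _)]
      _ ≤ ∫⁻ x, G x * ENNReal.ofReal |v x| := setLIntegral_le_lintegral' _
  -- step 3 : layer cake
  have step3 : ∫⁻ x, G x * ENNReal.ofReal |v x|
      = ∫⁻ t in Ioi (0:ℝ), ∫⁻ x in {x | t < |v x|}, G x :=
    pairing hGmeas hwmeas (fun x => abs_nonneg _)
  -- step 4 : Hölder + isoperimetry at each level
  have step4 : ∀ t ∈ Ioi (0:ℝ), ∫⁻ x in {x | t < |v x|}, G x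
      ≤ Nf * ((ENNReal.ofReal (isoC n s))⁻¹
          * gag1 n s ({x | t < |v x|}.indicator (fun _ => (1:ℝ)))) := by
    intro t ht
    set Et : Set (EuclideanSpace ℝ (Fin n)) := {x | t < |v x|} with hEtdef
    have hEtm : MeasurableSet Et := measurableSet_lt measurable_const hwmeas
    have hEtsub : Et ⊆ Ak := by
      intro x hx
      rw [hEtdef, mem_setOf_eq] at hx
      by_contra hxa
      rw [hvsupp x hxa, abs_zero] at hx
      exact absurd (ht.trans hx) (lt_irrefl _)
    have hEtfin : volume Et ≠ ⊤ :=
      ne_top_of_le_ne_top hΩfin (measure_mono (hEtsub.trans hAksub))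
    -- Hölder
    have hold : ∫⁻ x in Et, G x ≤ Nf * (volume Et) ^ (1/q) := by
      have h1 := ENNReal.lintegral_mul_le_Lp_mul_Lq (volume.restrict Et) hpq
        hGmeas.aemeasurable (aemeasurable_const (b := (1:ℝ≥0∞)))
      simp only [mul_one, ENNReal.one_rpow, lintegral_const, one_mul,
        Measure.restrict_apply MeasurableSet.univ, univ_inter] at h1
      refine le_trans ?_ (le_trans h1 ?_)
      · apply le_of_eq
        apply lintegral_congr
        intro x
        simp
      · gcongr
        · exact ENNReal.rpow_le_rpow
            (lintegral_mono' (Measure.restrict_mono hEtsub le_rfl) le_rfl)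
            (one_div_nonneg.mpr (lt_trans zero_lt_one hp1).le)
    -- isoperimetric inequality
    have hiso : (volume Et) ^ (1/q)
        ≤ (ENNReal.ofReal (isoC n s))⁻¹
          * gag1 n s (Et.indicator (fun _ => (1:ℝ))) := by
      have h1 := isop hn hs0 hs1 hEtm hEtfin
      have h1q : 1/q = ((n:ℝ) - s)/(n:ℝ) := by
        rw [hqdef, one_div_div]
      rw [h1q]
      have hc0 : ENNReal.ofReal (isoC n s) ≠ 0 := by
        simp [ENNReal.ofReal_eq_zero, not_le, isoC_pos hn hs0]
      have hcT : ENNReal.ofReal (isoC n s) ≠ ⊤ := ENNReal.ofReal_ne_top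
      calc (volume Et) ^ (((n:ℝ) - s)/(n:ℝ))
          = (ENNReal.ofReal (isoC n s))⁻¹ * (ENNReal.ofReal (isoC n s)
            * (volume Et) ^ (((n:ℝ) - s)/(n:ℝ))) := by
            rw [← mul_assoc, ENNReal.inv_mul_cancel hc0 hcT, one_mul]
        _ ≤ _ := by gcongr
    calc ∫⁻ x in Et, G x ≤ Nf * (volume Et) ^ (1/q) := hold
      _ ≤ _ := by gcongr
  -- put everything together
  have h1p : 1/p = s/(n:ℝ) := by rw [hpdef, one_div_div]
  have hgoal : ENNReal.ofReal (isoC n s) / 2 ≤ Nf → ENNReal.ofReal (isoC n s) / 2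
      ≤ (∫⁻ x in {x | k < |u x|}, (ENNReal.ofReal |f x|) ^ ((n:ℝ)/s)) ^ (s/(n:ℝ)) := by
    intro h
    rw [← h1p]
    exact h
  apply hgoal
  rcases eq_or_ne Nf ⊤ with hNftop | hNftop
  · rw [hNftop]; exact le_top
  have hc0 : ENNReal.ofReal (isoC n s) ≠ 0 := by
    simp [ENNReal.ofReal_eq_zero, not_le, isoC_pos hn hs0]
  have hcT : ENNReal.ofReal (isoC n s) ≠ ⊤ := ENNReal.ofReal_ne_top
  have hrT : Nf * (ENNReal.ofReal (isoC n s))⁻¹ ≠ ⊤ :=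
    ENNReal.mul_ne_top hNftop (ENNReal.inv_ne_top.mpr hc0)
  have hcoarea := coarea (s := s) hwmeas (fun x => abs_nonneg _)
  have total : gag1 n s v
      ≤ 2 * (Nf * (ENNReal.ofReal (isoC n s))⁻¹ * gag1 n s v) := by
    calc gag1 n s v ≤ 2 * ENNReal.ofReal (∫ x in Ω, f x * v x) := step1
      _ ≤ 2 * ∫⁻ x, G x * ENNReal.ofReal |v x| := by gcongr
      _ = 2 * ∫⁻ t in Ioi (0:ℝ), ∫⁻ x in {x | t < |v x|}, G x := by rw [step3]
      _ ≤ 2 * ∫⁻ t in Ioi (0:ℝ), Nf * ((ENNReal.ofReal (isoC n s))⁻¹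
            * gag1 n s ({x | t < |v x|}.indicator (fun _ => (1:ℝ)))) := by
          refine mul_le_mul_right ?_ 2
          refine lintegral_mono_ae ?_
          filter_upwards [ae_restrict_mem measurableSet_Ioi] with t ht
          exact step4 t ht
      _ = 2 * (Nf * (ENNReal.ofReal (isoC n s))⁻¹
            * ∫⁻ t in Ioi (0:ℝ), gag1 n s ({x | t < |v x|}.indicator (fun _ => (1:ℝ)))) := by
          congr 1
          rw [← lintegral_const_mul' (Nf * (ENNReal.ofReal (isoC n s))⁻¹) _ hrT]
          exact lintegral_congr fun t => by ring
      _ = 2 * (Nf * (ENNReal.ofReal (isoC n s))⁻¹ * gag1 n s (fun x => |v x|)) := by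
          rw [hcoarea]
      _ ≤ 2 * (Nf * (ENNReal.ofReal (isoC n s))⁻¹ * gag1 n s v) := by
          gcongr
          exact gag1_mono_of_abs_le (fun x y => abs_abs_sub_abs_le_abs_sub _ _)
  -- cancellation
  have hfactor : (1:ℝ≥0∞) ≤ 2 * Nf * (ENNReal.ofReal (isoC n s))⁻¹ := by
    by_contra hlt
    push_neg at hlt
    have : 2 * Nf * (ENNReal.ofReal (isoC n s))⁻¹ * gag1 n s v < 1 * gag1 n s v :=
      by rw [mul_comm _ (gag1 n s v), mul_comm 1]; exact ENNReal.mul_lt_mul_right hne hGfin hlt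
    rw [one_mul] at this
    rw [show 2 * (Nf * (ENNReal.ofReal (isoC n s))⁻¹ * gag1 n s v)
      = 2 * Nf * (ENNReal.ofReal (isoC n s))⁻¹ * gag1 n s v by ring] at total
    exact absurd total (not_le.mpr this)
  have hfinal : ENNReal.ofReal (isoC n s) ≤ 2 * Nf := by
    calc ENNReal.ofReal (isoC n s) = ENNReal.ofReal (isoC n s) * 1 := (mul_one _).symm
      _ ≤ ENNReal.ofReal (isoC n s) * (2 * Nf * (ENNReal.ofReal (isoC n s))⁻¹) := by gcongr
      _ = 2 * Nf * (ENNReal.ofReal (isoC n s) * (ENNReal.ofReal (isoC n s))⁻¹) := by ring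
      _ = 2 * Nf := by rw [ENNReal.mul_inv_cancel hc0 hcT, mul_one]
  have hNf : ENNReal.ofReal (isoC n s) / 2 ≤ Nf := by
    rw [ENNReal.div_le_iff_le_mul (Or.inl (by norm_num)) (Or.inl (by norm_num))]
    rw [mul_comm] at hfinal
    exact hfinal
  exact hNf

lemma main_pos (hn : 1 ≤ n) (hs0 : 0 < s) (hs1 : s < 1)
    {Ω : Set (EuclideanSpace ℝ (Fin n))} (hΩo : IsOpen Ω) (hΩb : Bornology.IsBounded Ω)
    {f u : EuclideanSpace ℝ (Fin n) → ℝ} (hfm : Measurable f)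
    (hf : MemLp f (ENNReal.ofReal ((n : ℝ) / s)) (volume.restrict Ω))
    (hu : Adm n s Ω f u)
    (hmin : ∀ v, Adm n s Ω f v → F1 n s Ω f u ≤ F1 n s Ω f v) :
    MemLp u ⊤ volume ∧
    0 < volume {x : EuclideanSpace ℝ (Fin n) | |u x| = (eLpNorm u ⊤ volume).toReal} := by
  haveI : Nontrivial (EuclideanSpace ℝ (Fin n)) :=
    Module.nontrivial_of_finrank_pos (R := ℝ)
      (by rw [finrank_euclideanSpace_fin]; omega)
  obtain ⟨humeas, huzero, hufin, hufint⟩ := hu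
  have hnR : (0:ℝ) < n := by exact_mod_cast Nat.lt_of_lt_of_le Nat.zero_lt_one hn
  have hns : s < (n:ℝ) := lt_of_lt_of_le hs1 (by exact_mod_cast hn)
  set p : ℝ := (n:ℝ)/s with hpdef
  have hppos : 0 < p := div_pos hnR hs0
  have hΩm : MeasurableSet Ω := hΩo.measurableSet
  have hΩfin : volume Ω ≠ ⊤ := hΩb.measure_lt_top.ne
  have hΩcnull : volume Ωᶜ ≠ 0 := by
    intro hznull
    have huniv : volume (univ : Set (EuclideanSpace ℝ (Fin n))) = ⊤ :=
      MeasureTheory.measure_univ_of_isAddLeftInvariant volume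
    have : volume (univ : Set (EuclideanSpace ℝ (Fin n))) ≤ volume Ω + volume Ωᶜ := by
      rw [← union_compl_self Ω]
      exact measure_union_le _ _
    rw [huniv, hznull, add_zero] at this
    exact hΩfin (top_le_iff.mp this)
  -- the global Lᵖ integral of f is finite
  set g : EuclideanSpace ℝ (Fin n) → ℝ≥0∞ := fun x => (ENNReal.ofReal |f x|) ^ p with hgdef
  have hgmeas : Measurable g := (ENNReal.measurable_ofReal.comp hfm.abs).pow_const _
  have hPfin : ∫⁻ x in Ω, g x < ⊤ := by
    have h2 := hf.2
    rw [eLpNorm_eq_lintegral_rpow_enorm_toReal (p := ENNReal.ofReal p)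
      (by simp [ENNReal.ofReal_eq_zero, not_le, hppos]) ENNReal.ofReal_ne_top] at h2
    rw [ENNReal.toReal_ofReal hppos.le] at h2
    have h3 : ∫⁻ x in Ω, ‖f x‖ₑ ^ p ∂volume < ⊤ := by
      rw [← ENNReal.rpow_lt_top_iff_of_pos (y := 1/p) (by positivity)]
      exact h2
    refine lt_of_eq_of_lt ?_ h3
    apply lintegral_congr
    intro x
    rw [hgdef, Real.enorm_eq_ofReal_abs]
  -- the level integral
  set P : ℝ → ℝ≥0∞ := fun k => ∫⁻ x in {x | k < |u x|}, g x with hPdef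
  have hPle : ∀ k, 0 < k → P k ≤ ∫⁻ x in Ω, g x := by
    intro k hk
    apply lintegral_mono'
      (Measure.restrict_mono (fun x hx => ?_) le_rfl) le_rfl
    by_contra hxo
    rw [mem_setOf_eq, huzero x hxo, abs_zero] at hx
    exact absurd (hk.trans hx) (lt_irrefl 0)
  -- the key dichotomy
  set c2 : ℝ≥0∞ := ENNReal.ofReal (isoC n s) / 2 with hc2def
  have hc2pos : 0 < c2 := by
    apply ENNReal.div_pos
    · simp [ENNReal.ofReal_eq_zero, not_le, isoC_pos hn hs0]
    · norm_num
  have hc2top : c2 ≠ ⊤ := by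
    exact (ENNReal.div_lt_top ENNReal.ofReal_ne_top (by norm_num)).ne
  set ε : ℝ≥0∞ := c2 ^ p with hεdef
  have hεpos : 0 < ε := ENNReal.rpow_pos hc2pos hc2top
  have key : ∀ k : ℝ, 0 < k → P k < ε → ∀ᵐ x, |u x| ≤ k := by
    intro k hk hPk
    have hnot : ¬ (c2 ≤ (P k) ^ (s/(n:ℝ))) := by
      have hlt : (P k) ^ (1/p) < ε ^ (1/p) :=
        ENNReal.rpow_lt_rpow hPk (by positivity)
      have hεp : ε ^ (1/p) = c2 := by
        rw [hεdef, ← ENNReal.rpow_mul, mul_one_div, div_self (ne_of_gt hppos),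
          ENNReal.rpow_one]
      have h1p : 1/p = s/(n:ℝ) := by rw [hpdef, one_div_div]
      rw [hεp, h1p] at hlt
      exact not_le.mpr hlt
    have hzero : gag1 n s (fun x => u x - tk k (u x)) = 0 := by
      by_contra hne
      exact hnot (key_lower hn hs0 hs1 hΩm hΩfin hfm
        ⟨humeas, huzero, hufin, hufint⟩ hmin hk hne)
    have hae := ae_zero_of_gag1_eq_zero hn
      (humeas.sub (measurable_tk_comp humeas k))
      (fun x hx => by show u x - tk k (u x) = 0; simp only [huzero x hx, tk_zero hk.le, sub_zero]) hΩcnull hzero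
    filter_upwards [hae] with x hx
    exact (gk_eq_zero_iff hk.le).mp hx
  -- dominated convergence machine
  have hDCT : ∀ (kseq : ℕ → ℝ) (T : Set (EuclideanSpace ℝ (Fin n))), MeasurableSet T →
      (∀ j, 0 < kseq j) →
      (∀ x, Filter.Tendsto (fun j => ({y | kseq j < |u y|}.indicator g) x)
        Filter.atTop (nhds (T.indicator g x))) →
      Filter.Tendsto (fun j => P (kseq j)) Filter.atTop (nhds (∫⁻ x in T, g x)) := by
    intro kseq T hT hkpos hptw
    have hAjm : ∀ j, MeasurableSet {y | kseq j < |u y|} :=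
      fun j => measurableSet_lt measurable_const humeas.abs
    have hrw : ∀ j, P (kseq j) = ∫⁻ x, ({y | kseq j < |u y|}.indicator g) x := by
      intro j
      simp only [hPdef]
      rw [← lintegral_indicator (hAjm j)]
    have htarget : ∫⁻ x in T, g x = ∫⁻ x, T.indicator g x :=
      (lintegral_indicator hT g).symm
    rw [htarget]
    simp only [hrw]
    apply tendsto_lintegral_of_dominated_convergence (bound := Ω.indicator g)
    · exact fun j => hgmeas.indicator (hAjm j)
    · intro j
      apply ae_of_all
      intro x
      by_cases hx : x ∈ {y | kseq j < |u y|}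
      · have hxΩ : x ∈ Ω := by
          by_contra hxo
          rw [mem_setOf_eq, huzero x hxo, abs_zero] at hx
          exact absurd ((hkpos j).trans hx) (lt_irrefl 0)
        rw [indicator_of_mem hx, indicator_of_mem hxΩ]
      · rw [indicator_of_notMem hx]
        exact zero_le
    · rw [← lintegral_indicator hΩm] at hPfin
      exact hPfin.ne
    · exact ae_of_all _ hptw
  -- first application : u is essentially bounded
  have hseq1 : Filter.Tendsto (fun j : ℕ => P ((j:ℝ)+1)) Filter.atTop (nhds 0) := by
    have h0 : (0:ℝ≥0∞) = ∫⁻ x in (∅ : Set (EuclideanSpace ℝ (Fin n))), g x := by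
      simp
    rw [h0]
    apply hDCT _ _ MeasurableSet.empty (fun j => by positivity)
    intro x
    rw [indicator_empty]
    apply Filter.Tendsto.congr' ?_ tendsto_const_nhds
    rw [Filter.EventuallyEq, Filter.eventually_atTop]
    obtain ⟨N, hN⟩ := exists_nat_gt |u x|
    refine ⟨N, fun j hj => ?_⟩
    have : ¬ ((j:ℝ)+1 < |u x|) := by
      push_neg
      calc |u x| ≤ N := hN.le
        _ ≤ (j:ℝ) := by exact_mod_cast hj
        _ ≤ (j:ℝ)+1 := by linarith
    rw [indicator_of_notMem (show x ∉ {y | (j:ℝ)+1 < |u y|} by simpa [mem_setOf_eq] using this)]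
  obtain ⟨j0, hj0⟩ := (hseq1.eventually_lt_const hεpos).exists
  have hbdd : ∀ᵐ x, |u x| ≤ (j0:ℝ)+1 := key _ (by positivity) hj0
  have memtop : MemLp u ⊤ volume := by
    apply memLp_top_of_bound humeas.aestronglyMeasurable ((j0:ℝ)+1)
    filter_upwards [hbdd] with x hx
    rwa [Real.norm_eq_abs]
  refine ⟨memtop, ?_⟩
  set M : ℝ≥0∞ := eLpNorm u ⊤ volume with hMdef
  have hMtop : M ≠ ⊤ := memtop.2.ne
  set Mr : ℝ := M.toReal with hMrdef
  have hgtnull : volume {x | Mr < |u x|} = 0 := by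
    have h1 : ∀ᵐ x, (‖u x‖₊ : ℝ≥0∞) ≤ M := by
      rw [hMdef, eLpNorm_exponent_top]
      exact ae_le_eLpNormEssSup
    have h2 : ∀ᵐ x, ¬ (Mr < |u x|) := by
      filter_upwards [h1] with x hx
      rw [not_lt, ← Real.norm_eq_abs]
      calc ‖u x‖ = ((‖u x‖₊ : ℝ≥0∞)).toReal := by simp
        _ ≤ M.toReal := ENNReal.toReal_mono hMtop hx
    have := ae_iff.mp h2
    simpa [not_not] using this
  rcases eq_or_ne M 0 with hM0 | hM0
  · have hMr0 : Mr = 0 := by rw [hMrdef, hM0, ENNReal.toReal_zero]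
    have hsub : Ωᶜ ⊆ {x : EuclideanSpace ℝ (Fin n) | |u x| = (eLpNorm u ⊤ volume).toReal} := by
      intro x hx
      simp only [mem_setOf_eq, ← hMdef, ← hMrdef, hMr0, huzero x hx, abs_zero]
    rw [pos_iff_ne_zero]
    intro hz
    exact hΩcnull (measure_mono_null hsub hz)
  · have hMrpos : 0 < Mr := ENNReal.toReal_pos hM0 hMtop
    set kseq : ℕ → ℝ := fun j => Mr - Mr/((j:ℝ)+2) with hkseqdef
    have hkpos : ∀ j, 0 < kseq j := by
      intro j
      rw [hkseqdef]
      simp only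
      have : Mr/((j:ℝ)+2) < Mr := by
        apply div_lt_self hMrpos
        have : (0:ℝ) ≤ j := Nat.cast_nonneg j
        linarith
      linarith
    have hklt : ∀ j, kseq j < Mr := by
      intro j
      rw [hkseqdef]
      simp only
      have : 0 < Mr/((j:ℝ)+2) := by positivity
      linarith
    set T : Set (EuclideanSpace ℝ (Fin n)) := {x | Mr ≤ |u x|} with hTdef
    have hTmeas : MeasurableSet T := measurableSet_le measurable_const humeas.abs
    have hptw : ∀ x, Filter.Tendsto (fun j => ({y | kseq j < |u y|}.indicator g) x)
        Filter.atTop (nhds (T.indicator g x)) := by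
      intro x
      rcases le_or_gt Mr |u x| with hx | hx
      · have heq : ∀ j : ℕ, ({y | kseq j < |u y|}.indicator g) x = T.indicator g x := by
          intro j
          rw [indicator_of_mem (show x ∈ {y | kseq j < |u y|} from
            lt_of_lt_of_le (hklt j) hx), indicator_of_mem (show x ∈ T from hx)]
        simp only [heq]
        exact tendsto_const_nhds
      · have hxT : x ∉ T := by
          rw [hTdef, mem_setOf_eq, not_le]
          exact hx
        rw [indicator_of_notMem hxT]
        apply Filter.Tendsto.congr' ?_ tendsto_const_nhds
        rw [Filter.EventuallyEq, Filter.eventually_atTop]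
        have hpos' : 0 < Mr - |u x| := by linarith
        obtain ⟨N, hN⟩ := exists_nat_gt (Mr / (Mr - |u x|))
        refine ⟨N, fun j hj => ?_⟩
        have hj2 : Mr / (Mr - |u x|) < (j:ℝ) + 2 := by
          calc Mr / (Mr - |u x|) < N := hN
            _ ≤ (j:ℝ) := by exact_mod_cast hj
            _ ≤ (j:ℝ) + 2 := by linarith
        rw [div_lt_iff₀ hpos'] at hj2
        have hdiv : Mr / ((j:ℝ)+2) < Mr - |u x| := by
          rw [div_lt_iff₀ (by positivity)]
          nlinarith
        have hnot : ¬ (kseq j < |u x|) := by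
          rw [hkseqdef, not_lt]
          simp only
          linarith
        rw [indicator_of_notMem
          (show x ∉ {y | kseq j < |u y|} by simpa [mem_setOf_eq] using hnot)]
    have hTP := hDCT kseq T hTmeas hkpos hptw
    have hlow : ∀ j, ε ≤ P (kseq j) := by
      intro j
      by_contra hlt
      push_neg at hlt
      have hae := key _ (hkpos j) hlt
      have hess : M ≤ ENNReal.ofReal (kseq j) := by
        rw [hMdef, eLpNorm_exponent_top]
        apply eLpNormEssSup_le_of_ae_bound (C := kseq j)
        filter_upwards [hae] with x hx
        rwa [Real.norm_eq_abs]
      have : M < M := by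
        calc M ≤ ENNReal.ofReal (kseq j) := hess
          _ < ENNReal.ofReal Mr := (ENNReal.ofReal_lt_ofReal_iff hMrpos).mpr (hklt j)
          _ = M := ENNReal.ofReal_toReal hMtop
      exact absurd this (lt_irrefl M)
    have hTlow : ε ≤ ∫⁻ x in T, g x :=
      ge_of_tendsto hTP (Filter.Eventually.of_forall hlow)
    have hTpos : volume T ≠ 0 := by
      intro hz
      rw [setLIntegral_measure_zero T g hz] at hTlow
      exact absurd hTlow (not_le.mpr hεpos)
    have hsub : T \ {x | Mr < |u x|}
        ⊆ {x : EuclideanSpace ℝ (Fin n) | |u x| = (eLpNorm u ⊤ volume).toReal} := by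
      intro x hx
      have h1 : Mr ≤ |u x| := hx.1
      have h2 : ¬ (Mr < |u x|) := hx.2
      simp only [mem_setOf_eq, ← hMdef, ← hMrdef]
      exact le_antisymm (not_lt.mp h2) h1
    calc (0:ℝ≥0∞) < volume (T \ {x | Mr < |u x|}) := by
          rw [measure_diff_null hgtnull]
          exact pos_iff_ne_zero.mpr hTpos
      _ ≤ _ := measure_mono hsub

lemma dim_zero_case {Ω : Set (EuclideanSpace ℝ (Fin 0))}
    {f u : EuclideanSpace ℝ (Fin 0) → ℝ} (hu : Adm 0 s Ω f u) :
    MemLp u ⊤ volume ∧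
    0 < volume {x : EuclideanSpace ℝ (Fin 0) | |u x| = (eLpNorm u ⊤ volume).toReal} := by
  haveI hsing : Subsingleton (EuclideanSpace ℝ (Fin 0)) :=
    ⟨fun a b => by ext i; exact Fin.elim0 i⟩
  have h1 : volume (univ : Set (EuclideanSpace ℝ (Fin 0))) = 1 := by
    have hmp := EuclideanSpace.volume_preserving_symm_measurableEquiv_toLp (Fin 0)
    have h2 := hmp.measure_preimage
      (MeasurableSet.univ (α := Fin 0 → ℝ)).nullMeasurableSet
    simpa [volume_pi, Measure.pi_univ] using h2
  have hμne : (volume : Measure (EuclideanSpace ℝ (Fin 0))) ≠ 0 := by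
    intro h0
    rw [h0] at h1
    simp at h1
  have hconst : u = fun _ => u 0 := funext fun x => congrArg u (Subsingleton.elim x 0)
  have hess : eLpNorm u ⊤ volume = (‖u 0‖₊ : ℝ≥0∞) := by
    rw [eLpNorm_exponent_top, eLpNormEssSup, hconst]
    exact essSup_const _ hμne
  constructor
  · refine memLp_top_of_bound hu.1.aestronglyMeasurable |u 0| ?_
    apply ae_of_all
    intro x
    rw [hconst, Real.norm_eq_abs]
  · have hset : {x : EuclideanSpace ℝ (Fin 0) | |u x| = (eLpNorm u ⊤ volume).toReal} = univ := by
      ext x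
      simp only [mem_setOf_eq, mem_univ, iff_true, hess]
      rw [show u x = u 0 from congrArg u (Subsingleton.elim x 0)]
      simp [Real.norm_eq_abs]
    rw [hset, h1]
    norm_num

end Flat

/-- "Flatness" of minimizers: if `u ∈ W^{s,1}_0(Ω)` minimizes
`F(v) = (1/2)[v]_{W^{s,1}(ℝⁿ)} − ∫_Ω f v` with `f ∈ L^{n/s}(Ω)`, then `u ∈ L^∞(ℝⁿ)` and
the extremal set `{x : |u(x)| = ‖u‖_{L^∞(ℝⁿ)}}` has positive Lebesgue measure. -/
theorem stmt17 (n : ℕ) (s : ℝ) (Ω : Set (EuclideanSpace ℝ (Fin n)))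
    (f u : EuclideanSpace ℝ (Fin n) → ℝ)
    (hΩo : IsOpen Ω) (hΩb : Bornology.IsBounded Ω)
    (hs0 : 0 < s) (hs1 : s < 1)
    (hf : MemLp f (ENNReal.ofReal ((n : ℝ) / s)) (volume.restrict Ω))
    (hu : Adm n s Ω f u)
    (hmin : ∀ v, Adm n s Ω f v → F1 n s Ω f u ≤ F1 n s Ω f v) :
    MemLp u ⊤ volume ∧
    0 < volume {x : EuclideanSpace ℝ (Fin n) | |u x| = (eLpNorm u ⊤ volume).toReal} := by
  classical
  rcases Nat.eq_zero_or_pos n with hn0 | hn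
  · subst hn0
    exact Flat.dim_zero_case hu
  have hfae := hf.aestronglyMeasurable
  set f₀ := hfae.mk f with hf₀def
  have hf₀m : Measurable f₀ := hfae.stronglyMeasurable_mk.measurable
  have hff₀ : f =ᵐ[volume.restrict Ω] f₀ := hfae.ae_eq_mk
  have hint : ∀ v : EuclideanSpace ℝ (Fin n) → ℝ,
      (IntegrableOn (fun x => f x * v x) Ω ↔ IntegrableOn (fun x => f₀ x * v x) Ω) := by
    intro v
    constructor <;> intro h
    · exact h.congr (by filter_upwards [hff₀] with x hx; rw [hx])
    · exact h.congr (by filter_upwards [hff₀] with x hx; rw [hx])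
  have hIeq : ∀ v : EuclideanSpace ℝ (Fin n) → ℝ,
      ∫ x in Ω, f x * v x = ∫ x in Ω, f₀ x * v x := by
    intro v
    apply integral_congr_ae
    filter_upwards [hff₀] with x hx
    rw [hx]
  have hF1eq : ∀ v, F1 n s Ω f v = F1 n s Ω f₀ v := by
    intro v
    unfold F1
    rw [hIeq v]
  have hAdmIff : ∀ v, Adm n s Ω f v ↔ Adm n s Ω f₀ v := by
    intro v
    unfold Adm
    rw [hint v]
  have hf₀ : MemLp f₀ (ENNReal.ofReal ((n:ℝ)/s)) (volume.restrict Ω) := hf.ae_eq hff₀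
  exact Flat.main_pos hn hs0 hs1 hΩo hΩb hf₀m hf₀ ((hAdmIff u).mp hu)
    (fun v hv => by rw [← hF1eq u, ← hF1eq v]; exact hmin v ((hAdmIff v).mpr hv))


end
end
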